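/- arXiv:0902.0351 — 10 statements merged into one kernel-verified Lean document; each statement's English description precedes it below -/
import Mathlib

section
/- Let z₁, z₂, z₃, z₄ ∈ ℂ and let j₁, j₂, j₃, j₄ be positive real numbers satisfying the closure constraint Σᵢ jᵢ N(zᵢ) = 0. Then for every matrix g = [[a,b],[c,d]] with a,b,c,d ∈ ℂ and ad − bc = 1, one has ∏ᵢ ((1+|zᵢ|²)/(|a·zᵢ + b|² + |c·zᵢ + d|²))^{jᵢ} ≤ 1. Moreover, if the vectors N(z₁),…,N(z₄) are not collinear, then equality holds if and only if g is unitary (g*g = 1), i.e. g ∈ SU(2). -/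
open Matrix

/-- Inverse stereographic projection: the unit vector `N(z) ∈ ℝ³` associated to `z ∈ ℂ`. -/
noncomputable def Nvec (z : ℂ) : Fin 3 → ℝ :=
  ![-2 * z.re / (1 + ‖z‖ ^ 2),
    2 * z.im / (1 + ‖z‖ ^ 2),
    (1 - ‖z‖ ^ 2) / (1 + ‖z‖ ^ 2)]

/-- The vectors `N(z₁),…,N(z₄)` are collinear if they all lie in `{M, −M}` for some unit
vector `M ∈ ℝ³`. -/
def NCollinear (z : Fin 4 → ℂ) : Prop :=
  ∃ M : Fin 3 → ℝ, (∑ x, M x ^ 2 = 1) ∧ ∀ i, Nvec (z i) = M ∨ Nvec (z i) = -M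

lemma Nvec_unit (z : ℂ) :
    (Nvec z 0)^2 + (Nvec z 1)^2 + (Nvec z 2)^2 = 1 := by
  have hA : (0:ℝ) < 1 + ‖z‖ ^ 2 := by positivity
  simp only [Nvec, Matrix.cons_val_zero, Matrix.cons_val_one, Matrix.head_cons,
    Matrix.cons_val_two, Matrix.tail_cons]
  have hz : ‖z‖ ^ 2 = z.re^2 + z.im^2 := by
    rw [Complex.sq_norm, Complex.normSq_apply]; ring
  field_simp
  rw [hz]; ring

lemma log_one_eq {h0 r : ℝ} (hr : 0 ≤ r) (h0pos : 0 < h0) (h0sq : h0^2 = 1 + r^2) :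
    Real.log (h0 - r) = - Real.log (h0 + r) := by
  have h1 : r < h0 := by nlinarith
  have hm : (h0 - r) * (h0 + r) = 1 := by nlinarith
  have hlm := Real.log_mul (by linarith : (0:ℝ) < h0 - r).ne' (by linarith : (0:ℝ) < h0 + r).ne'
  rw [hm, Real.log_one] at hlm
  linarith

lemma log_chord {h0 r s : ℝ} (hr : 0 < r) (h0pos : 0 < h0) (h0sq : h0^2 = 1 + r^2)
    (hs : s^2 ≤ r^2) :
    -(s/r) * Real.log (h0 + r) ≤ Real.log (h0 - s) := by
  have hs1 : -r ≤ s := by nlinarith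
  have hs2 : s ≤ r := by nlinarith
  have hrh : r < h0 := by nlinarith
  set t : ℝ := (r + s) / (2*r) with ht
  have ht0 : 0 ≤ t := by apply div_nonneg <;> linarith
  have ht1 : 0 ≤ 1 - t := by
    rw [ht, sub_nonneg, div_le_one (by linarith)]; linarith
  have key : h0 - s = t • (h0 - r) + (1 - t) • (h0 + r) := by
    simp only [smul_eq_mul]; rw [ht]; field_simp; ring
  have hx : h0 - r ∈ Set.Ioi (0:ℝ) := by simp; linarith
  have hy : h0 + r ∈ Set.Ioi (0:ℝ) := by simp; linarith
  have hc := strictConcaveOn_log_Ioi.concaveOn.2 hx hy ht0 ht1 (by ring)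
  rw [← key] at hc
  have hlog := log_one_eq (le_of_lt hr) h0pos h0sq
  calc -(s/r) * Real.log (h0 + r)
      = t • Real.log (h0 - r) + (1-t) • Real.log (h0 + r) := by
        rw [hlog]; simp only [smul_eq_mul]; rw [ht]; field_simp; ring
    _ ≤ Real.log (h0 - s) := hc

lemma log_chord_strict {h0 r s : ℝ} (hr : 0 < r) (h0pos : 0 < h0) (h0sq : h0^2 = 1 + r^2)
    (hs : s^2 < r^2) :
    -(s/r) * Real.log (h0 + r) < Real.log (h0 - s) := by
  have hs1 : -r < s := by nlinarith
  have hs2 : s < r := by nlinarith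
  have hrh : r < h0 := by nlinarith
  set t : ℝ := (r + s) / (2*r) with ht
  have ht0 : 0 < t := by apply div_pos <;> linarith
  have ht1 : 0 < 1 - t := by
    rw [ht, sub_pos, div_lt_one (by linarith)]; linarith
  have key : h0 - s = t • (h0 - r) + (1 - t) • (h0 + r) := by
    simp only [smul_eq_mul]; rw [ht]; field_simp; ring
  have hx : h0 - r ∈ Set.Ioi (0:ℝ) := by simp; linarith
  have hy : h0 + r ∈ Set.Ioi (0:ℝ) := by simp; linarith
  have hne : h0 - r ≠ h0 + r := by intro h; nlinarith
  have hc := strictConcaveOn_log_Ioi.2 hx hy hne ht0 ht1 (by ring)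
  rw [← key] at hc
  have hlog := log_one_eq (le_of_lt hr) h0pos h0sq
  calc -(s/r) * Real.log (h0 + r)
      = t • Real.log (h0 - r) + (1-t) • Real.log (h0 + r) := by
        rw [hlog]; simp only [smul_eq_mul]; rw [ht]; field_simp; ring
    _ < Real.log (h0 - s) := hc

/-- Cauchy–Schwarz bound for the pairing with a unit `Nvec`. -/
lemma s_sq_le (w : ℂ) (h1 h2 h3 : ℝ) :
    (h1 * Nvec w 0 + h2 * Nvec w 1 + h3 * Nvec w 2)^2 ≤ h1^2 + h2^2 + h3^2 := by
  have hN := Nvec_unit w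
  nlinarith [sq_nonneg (h1 * Nvec w 1 - h2 * Nvec w 0), sq_nonneg (h1 * Nvec w 2 - h3 * Nvec w 0),
    sq_nonneg (h2 * Nvec w 2 - h3 * Nvec w 1)]

lemma h0_sub_s_pos (w : ℂ) {h0 h1 h2 h3 : ℝ} (h0pos : 0 < h0)
    (h0sq : h0^2 = 1 + (h1^2 + h2^2 + h3^2)) :
    0 < h0 - (h1 * Nvec w 0 + h2 * Nvec w 1 + h3 * Nvec w 2) := by
  have hcs := s_sq_le w h1 h2 h3
  nlinarith [sq_nonneg (h0 + (h1 * Nvec w 0 + h2 * Nvec w 1 + h3 * Nvec w 2))]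

lemma comp_eq {r h1 h2 h3 n0 n1 n2 : ℝ} (hrpos : 0 < r) (hr2 : r^2 = h1^2 + h2^2 + h3^2)
    (hn : n0^2 + n1^2 + n2^2 = 1) (hsr : h1*n0 + h2*n1 + h3*n2 = r) :
    n0 = h1/r ∧ n1 = h2/r ∧ n2 = h3/r := by
  have key : (r*n0 - h1)^2 + (r*n1 - h2)^2 + (r*n2 - h3)^2 = 0 := by nlinarith
  refine ⟨?_, ?_, ?_⟩ <;> rw [eq_div_iff hrpos.ne', mul_comm]
  · nlinarith [sq_nonneg (r*n1 - h2), sq_nonneg (r*n2 - h3)]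
  · nlinarith [sq_nonneg (r*n0 - h1), sq_nonneg (r*n2 - h3)]
  · nlinarith [sq_nonneg (r*n0 - h1), sq_nonneg (r*n1 - h2)]

/-- The core convexity estimate on the constraint surface. -/
lemma core (z : Fin 4 → ℂ) (j : Fin 4 → ℝ) (hj : ∀ i, 0 < j i)
    (hclo : ∀ k, ∑ i, j i * Nvec (z i) k = 0)
    (h0 h1 h2 h3 : ℝ) (h0pos : 0 < h0) (h0sq : h0^2 = 1 + (h1^2 + h2^2 + h3^2)) :
    0 ≤ ∑ i, j i * Real.log (h0 - (h1 * Nvec (z i) 0 + h2 * Nvec (z i) 1 + h3 * Nvec (z i) 2)) ∧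
    (¬ NCollinear z →
      ∑ i, j i * Real.log (h0 - (h1 * Nvec (z i) 0 + h2 * Nvec (z i) 1 + h3 * Nvec (z i) 2)) = 0 →
      h1 = 0 ∧ h2 = 0 ∧ h3 = 0) := by
  set s : Fin 4 → ℝ := fun i => h1 * Nvec (z i) 0 + h2 * Nvec (z i) 1 + h3 * Nvec (z i) 2 with hs
  set r : ℝ := Real.sqrt (h1^2 + h2^2 + h3^2) with hrdef
  have hr0 : 0 ≤ r := Real.sqrt_nonneg _
  have hr2 : r^2 = h1^2 + h2^2 + h3^2 := Real.sq_sqrt (by positivity)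
  have h0sq' : h0^2 = 1 + r^2 := by rw [hr2]; exact h0sq
  have hs2 : ∀ i, (s i)^2 ≤ r^2 := by
    intro i; rw [hr2]; exact s_sq_le (z i) h1 h2 h3
  have hsum : ∑ i, j i * s i = 0 := by
    have e : ∑ i, j i * s i
        = h1 * (∑ i, j i * Nvec (z i) 0) + h2 * (∑ i, j i * Nvec (z i) 1)
          + h3 * (∑ i, j i * Nvec (z i) 2) := by
      simp only [Finset.mul_sum, ← Finset.sum_add_distrib, hs]
      exact Finset.sum_congr rfl fun i _ => by ring
    rw [e, hclo 0, hclo 1, hclo 2]; ring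
  rcases eq_or_lt_of_le hr0 with hre | hrpos
  · -- r = 0
    have h123 : h1 = 0 ∧ h2 = 0 ∧ h3 = 0 := by
      have h0' : h1^2 + h2^2 + h3^2 = 0 := by rw [← hr2, ← hre]; ring
      refine ⟨by nlinarith, by nlinarith, by nlinarith⟩
    have hz : ∀ i, Real.log (h0 - s i) = 0 := by
      intro i
      have hsi : s i = 0 := by
        have := hs2 i; rw [← hre] at this; nlinarith
      have h01 : h0 = 1 := by nlinarith
      rw [hsi, h01]; simp
    constructor
    · refine le_of_eq ?_
      symm
      refine Finset.sum_eq_zero fun i _ => by rw [hz i, mul_zero]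
    · intro _ _; exact h123
  · -- r > 0
    have hterm : ∀ i, -(s i / r) * Real.log (h0 + r) ≤ Real.log (h0 - s i) :=
      fun i => log_chord hrpos h0pos h0sq' (hs2 i)
    have hbsum : ∑ i, j i * (-(s i / r) * Real.log (h0 + r)) = 0 := by
      have e : ∑ i, j i * (-(s i / r) * Real.log (h0 + r))
          = (-(Real.log (h0 + r)) / r) * ∑ i, j i * s i := by
        rw [Finset.mul_sum]
        refine Finset.sum_congr rfl fun i _ => ?_
        ring
      rw [e, hsum, mul_zero]
    constructor
    · calc (0:ℝ) = ∑ i, j i * (-(s i / r) * Real.log (h0 + r)) := hbsum.symm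
        _ ≤ ∑ i, j i * Real.log (h0 - s i) :=
            Finset.sum_le_sum fun i _ => mul_le_mul_of_nonneg_left (hterm i) (hj i).le
    · intro hNC hL0
      exfalso; apply hNC
      have heach : ∀ i, j i * (-(s i / r) * Real.log (h0 + r)) = j i * Real.log (h0 - s i) := by
        intro i
        by_contra hne
        have hlt : j i * (-(s i / r) * Real.log (h0 + r)) < j i * Real.log (h0 - s i) :=
          lt_of_le_of_ne (mul_le_mul_of_nonneg_left (hterm i) (hj i).le) hne
        have hstrict := Finset.sum_lt_sum
          (fun k (_ : k ∈ Finset.univ) => mul_le_mul_of_nonneg_left (hterm k) (hj k).le)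
          ⟨i, Finset.mem_univ i, hlt⟩
        rw [hbsum, hL0] at hstrict
        exact lt_irrefl 0 hstrict
      have hsr : ∀ i, s i = r ∨ s i = -r := by
        intro i
        have heq : -(s i / r) * Real.log (h0 + r) = Real.log (h0 - s i) :=
          mul_left_cancel₀ (hj i).ne' (heach i)
        by_contra hcon
        push_neg at hcon
        have hlt : (s i)^2 < r^2 := by
          rcases lt_or_eq_of_le (hs2 i) with h | h
          · exact h
          · exfalso
            have hmul : (s i - r) * (s i + r) = 0 := by nlinarith
            rcases mul_eq_zero.mp hmul with h' | h'
            · exact hcon.1 (by linarith)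
            · exact hcon.2 (by linarith)
        exact absurd heq (ne_of_lt (log_chord_strict hrpos h0pos h0sq' hlt))
      refine ⟨![h1/r, h2/r, h3/r], ?_, ?_⟩
      · rw [Fin.sum_univ_three]
        simp only [Matrix.cons_val_zero, Matrix.cons_val_one, Matrix.head_cons,
          Matrix.cons_val_two, Matrix.tail_cons]
        field_simp
        linarith [hr2]
      · intro i
        have hNi := Nvec_unit (z i)
        rcases hsr i with h | h
        · left
          obtain ⟨e0, e1, e2⟩ := comp_eq hrpos hr2 hNi (h : h1 * Nvec (z i) 0 + h2 * Nvec (z i) 1 + h3 * Nvec (z i) 2 = r)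
          funext k
          fin_cases k
          · exact e0
          · exact e1
          · exact e2
        · right
          have h' : (-h1) * Nvec (z i) 0 + (-h2) * Nvec (z i) 1 + (-h3) * Nvec (z i) 2 = r := by
            have : h1 * Nvec (z i) 0 + h2 * Nvec (z i) 1 + h3 * Nvec (z i) 2 = -r := h
            linarith
          have hr2' : r^2 = (-h1)^2 + (-h2)^2 + (-h3)^2 := by rw [hr2]; ring
          obtain ⟨e0, e1, e2⟩ := comp_eq hrpos hr2' hNi h'
          rw [neg_div] at e0 e1 e2
          funext k
          fin_cases k
          · exact e0
          · exact e1
          · exact e2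

lemma auxDivHelper {A E : ℝ} (hA : 0 < A) (hE : 0 < E) : A / (E * A) = E⁻¹ := by
  field_simp

set_option maxHeartbeats 1000000 in
/-- On the constraint surface `Σᵢ jᵢ N(zᵢ) = 0`, the factor
`∏ᵢ ((1+|zᵢ|²)/(|a zᵢ + b|² + |c zᵢ + d|²))^{jᵢ}` is `≤ 1` for every `g ∈ SL(2,ℂ)`,
and if the `N(zᵢ)` are not collinear, it equals `1` iff `g ∈ SU(2)`. -/
theorem rho_le_one_on_constraint_surface
    (z : Fin 4 → ℂ) (j : Fin 4 → ℝ) (hj : ∀ i, 0 < j i)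
    (hclo : ∑ i, j i • Nvec (z i) = 0)
    (a b c d : ℂ) (hdet : a * d - b * c = 1) :
    (∏ i, ((1 + ‖z i‖ ^ 2) /
        (‖a * z i + b‖ ^ 2 + ‖c * z i + d‖ ^ 2)) ^ (j i)) ≤ 1 ∧
    (¬ NCollinear z →
      ((∏ i, ((1 + ‖z i‖ ^ 2) /
          (‖a * z i + b‖ ^ 2 + ‖c * z i + d‖ ^ 2)) ^ (j i)) = 1 ↔
        (!![a, b; c, d])ᴴ * !![a, b; c, d] = 1)) := by
  obtain ⟨q, hqdef⟩ : ∃ x : ℂ, x = (starRingEnd ℂ) a * b + (starRingEnd ℂ) c * d := ⟨_, rfl⟩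
  obtain ⟨p, hpdef⟩ : ∃ x : ℝ, x = ‖a‖ ^ 2 + ‖c‖ ^ 2 := ⟨_, rfl⟩
  obtain ⟨rr, hrrdef⟩ : ∃ x : ℝ, x = ‖b‖ ^ 2 + ‖d‖ ^ 2 := ⟨_, rfl⟩
  have hdet' : p * rr - ‖q‖ ^ 2 = 1 := by
    rw [hpdef, hrrdef, hqdef]
    have h := congrArg Complex.normSq hdet
    simp only [Complex.normSq_sub, Complex.normSq_mul, Complex.normSq_one] at h
    simp only [Complex.sq_norm, Complex.normSq_apply, Complex.mul_re, Complex.mul_im,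
      Complex.add_re, Complex.add_im, Complex.conj_re, Complex.conj_im] at *
    nlinarith [h]
  have habsq : ‖q‖ ^ 2 = q.re ^ 2 + q.im ^ 2 := by
    rw [Complex.sq_norm, Complex.normSq_apply]; ring
  have hp0 : 0 ≤ p := by rw [hpdef]; positivity
  have hrr0 : 0 ≤ rr := by rw [hrrdef]; positivity
  have hprr : 1 ≤ p * rr := by nlinarith [sq_nonneg (‖q‖)]
  have h0pos : 0 < (p + rr) / 2 := by nlinarith
  have h0sq : ((p + rr) / 2) ^ 2 = 1 + (q.re ^ 2 + (-q.im) ^ 2 + ((p - rr) / 2) ^ 2) := by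
    nlinarith [hdet', habsq]
  have hclo' : ∀ k, ∑ i, j i * Nvec (z i) k = 0 := by
    intro k
    have hk := congrFun hclo k
    simpa [Finset.sum_apply, Pi.smul_apply, smul_eq_mul] using hk
  have hDkey : ∀ w : ℂ, ‖a * w + b‖ ^ 2 + ‖c * w + d‖ ^ 2
      = ((p + rr) / 2
          - (q.re * Nvec w 0 + (-q.im) * Nvec w 1 + ((p - rr) / 2) * Nvec w 2))
        * (1 + ‖w‖ ^ 2) := by
    intro w
    rw [hpdef, hrrdef, hqdef]
    have hA : (0:ℝ) < 1 + ‖w‖ ^ 2 := by positivity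
    simp only [Nvec, Matrix.cons_val_zero, Matrix.cons_val_one, Matrix.head_cons,
      Matrix.cons_val_two, Matrix.tail_cons]
    field_simp
    simp only [Complex.sq_norm, Complex.normSq_apply, Complex.mul_re, Complex.mul_im,
      Complex.add_re, Complex.add_im, Complex.conj_re, Complex.conj_im]
    ring
  have hspos : ∀ w : ℂ, 0 < (p + rr) / 2
      - (q.re * Nvec w 0 + (-q.im) * Nvec w 1 + ((p - rr) / 2) * Nvec w 2) :=
    fun w => h0_sub_s_pos w h0pos h0sq
  obtain ⟨hL, hLeq⟩ := core z j hj hclo' ((p + rr) / 2) q.re (-q.im) ((p - rr) / 2) h0pos h0sq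
  have hfrac : ∀ i : Fin 4, (1 + ‖z i‖ ^ 2) /
      (‖a * z i + b‖ ^ 2 + ‖c * z i + d‖ ^ 2)
      = ((p + rr) / 2
          - (q.re * Nvec (z i) 0 + (-q.im) * Nvec (z i) 1 + ((p - rr) / 2) * Nvec (z i) 2))⁻¹ := by
    intro i
    rw [hDkey (z i)]
    exact auxDivHelper (by positivity) (hspos (z i))
  have hprod : (∏ i, ((1 + ‖z i‖ ^ 2) /
        (‖a * z i + b‖ ^ 2 + ‖c * z i + d‖ ^ 2)) ^ (j i))
      = Real.exp (-(∑ i, j i * Real.log ((p + rr) / 2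
          - (q.re * Nvec (z i) 0 + (-q.im) * Nvec (z i) 1 + ((p - rr) / 2) * Nvec (z i) 2)))) := by
    rw [← Finset.sum_neg_distrib, Real.exp_sum]
    refine Finset.prod_congr rfl fun i _ => ?_
    rw [hfrac i, Real.rpow_def_of_pos (inv_pos.mpr (hspos (z i)))]
    congr 1
    rw [Real.log_inv]; ring
  constructor
  · rw [hprod, Real.exp_le_one_iff]
    linarith
  · intro hNC
    constructor
    · intro hPeq
      rw [hprod, Real.exp_eq_one_iff] at hPeq
      obtain ⟨e1, e2, e3⟩ := hLeq hNC (by linarith)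
      have hq0 : q = 0 := by
        apply Complex.ext
        · simpa using e1
        · simp only [Complex.zero_im]; linarith
      have hpr : p = rr := by linarith
      rw [hq0] at hdet'
      simp only [map_zero, norm_zero, ne_eq, OfNat.ofNat_ne_zero, not_false_eq_true, zero_pow, sub_zero] at hdet'
      have hp1 : p = 1 := by nlinarith
      have hrr1 : rr = 1 := by linarith
      have ha1 : (starRingEnd ℂ) a * a + (starRingEnd ℂ) c * c = 1 := by
        rw [← Complex.normSq_eq_conj_mul_self, ← Complex.normSq_eq_conj_mul_self]
        have : ((Complex.normSq a + Complex.normSq c : ℝ) : ℂ) = ((1:ℝ) : ℂ) := by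
          norm_cast
          rw [← Complex.sq_norm, ← Complex.sq_norm, ← hpdef, hp1]
        push_cast at this
        simpa using this
      have hb1 : (starRingEnd ℂ) b * b + (starRingEnd ℂ) d * d = 1 := by
        rw [← Complex.normSq_eq_conj_mul_self, ← Complex.normSq_eq_conj_mul_self]
        have : ((Complex.normSq b + Complex.normSq d : ℝ) : ℂ) = ((1:ℝ) : ℂ) := by
          norm_cast
          rw [← Complex.sq_norm, ← Complex.sq_norm, ← hrrdef, hrr1]
        push_cast at this
        simpa using this
      have hq1 : (starRingEnd ℂ) a * b + (starRingEnd ℂ) c * d = 0 := by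
        rw [← hqdef, hq0]
      have hq2 : (starRingEnd ℂ) b * a + (starRingEnd ℂ) d * c = 0 := by
        have := congrArg (starRingEnd ℂ) hq1
        simpa [mul_comm] using this
      ext i k
      fin_cases i <;> fin_cases k <;>
        simp [Matrix.mul_apply, Matrix.conjTranspose_apply, Fin.sum_univ_two, Matrix.one_apply,
          ha1, hb1, hq1, hq2]
    · intro hU
      have h00 := congrFun (congrFun hU 0) 0
      have h01 := congrFun (congrFun hU 0) 1
      have h11 := congrFun (congrFun hU 1) 1
      simp [Matrix.mul_apply, Matrix.conjTranspose_apply, Fin.sum_univ_two,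
        Matrix.one_apply] at h00 h01 h11
      have hq0 : q = 0 := by rw [hqdef]; exact h01
      have hp1 : p = 1 := by
        have hcast : ((p : ℝ) : ℂ) = 1 := by
          rw [hpdef, Complex.sq_norm, Complex.sq_norm]
          push_cast
          rw [Complex.normSq_eq_conj_mul_self, Complex.normSq_eq_conj_mul_self]
          exact h00
        exact_mod_cast hcast
      have hrr1 : rr = 1 := by
        have hcast : ((rr : ℝ) : ℂ) = 1 := by
          rw [hrrdef, Complex.sq_norm, Complex.sq_norm]
          push_cast
          rw [Complex.normSq_eq_conj_mul_self, Complex.normSq_eq_conj_mul_self]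
          exact h11
        exact_mod_cast hcast
      have hE1 : ∀ i : Fin 4, (p + rr) / 2
          - (q.re * Nvec (z i) 0 + -q.im * Nvec (z i) 1 + (p - rr) / 2 * Nvec (z i) 2) = 1 := by
        intro i
        rw [hp1, hrr1, hq0]
        norm_num [Complex.zero_re, Complex.zero_im]
      have hsum0 : (∑ i, j i * Real.log ((p + rr) / 2
          - (q.re * Nvec (z i) 0 + -q.im * Nvec (z i) 1 + (p - rr) / 2 * Nvec (z i) 2))) = 0 :=
        Finset.sum_eq_zero fun i _ => by rw [hE1 i, Real.log_one, mul_zero]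
      rw [hprod, hsum0, neg_zero, Real.exp_zero]
end

section
/- Let j₁, j₂, j₃, j₄ be positive real numbers such that Σᵢ εᵢ jᵢ ≠ 0 for every choice of signs εᵢ ∈ {+1,−1} (regularity) and 2jᵢ < j₁+j₂+j₃+j₄ for every i. Let z₁, z₂, z₃, z₄ ∈ ℂ be pairwise distinct. Then there exist a,b,c,d ∈ ℂ with ad − bc = 1 such that c·zᵢ + d ≠ 0 for all i and Σᵢ jᵢ N((a·zᵢ + b)/(c·zᵢ + d)) = 0. (Every stable configuration lies on the SL(2,ℂ)-orbit of the constraint surface: surjectivity part of the Guillemin–Sternberg isomorphism for 4-gons.) -/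
open Matrix

set_option maxHeartbeats 1000000


noncomputable def Fpot (j : Fin 4 → ℝ) (z : Fin 4 → ℂ) (p : ℂ × ℝ) : ℝ :=
  ∑ i, j i * (Real.log (((z i).re - p.1.re)^2 + ((z i).im - p.1.im)^2 + Real.exp (2*p.2)) - p.2)

lemma sq_abs_eq (w : ℂ) : ‖w‖ ^ 2 = w.re^2 + w.im^2 := by
  rw [Complex.sq_norm, Complex.normSq_apply]; ring

-- lower bound for one term, "self" version
lemma term_lb_self (c t : ℝ) (hc : 0 ≤ c) :
    t ≤ Real.log (c + Real.exp (2*t)) - t := by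
  have h : 2*t ≤ Real.log (c + Real.exp (2*t)) := by
    calc 2*t = Real.log (Real.exp (2*t)) := (Real.log_exp _).symm
    _ ≤ _ := Real.log_le_log (Real.exp_pos _) (by linarith)
  linarith

lemma term_lb_rho (c t ρ : ℝ) (hρ : 0 < ρ) (hc : ρ^2 ≤ c) :
    2*Real.log ρ - t ≤ Real.log (c + Real.exp (2*t)) - t := by
  have h : Real.log (ρ^2) ≤ Real.log (c + Real.exp (2*t)) :=
    Real.log_le_log (by positivity) (by linarith [(Real.exp_pos (2*t)).le])
  rw [Real.log_pow] at h
  push_cast at h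
  linarith

lemma tendstoF (j : Fin 4 → ℝ) (hj : ∀ i, 0 < j i)
    (hineq : ∀ i, 2 * j i < ∑ k, j k)
    (z : Fin 4 → ℂ) (hz : ∀ i k, i ≠ k → z i ≠ z k) :
    Filter.Tendsto (Fpot j z) (Filter.cocompact (ℂ × ℝ)) Filter.atTop := by
  classical
  set J := ∑ k, j k with hJdef
  have hJ : 0 < J := by
    have := hj 0; have := hineq 0; linarith
  -- bound B on the points
  set B : ℝ := Finset.univ.sup' ⟨0, Finset.mem_univ 0⟩ (fun i => ‖z i‖) with hBdef
  have hB : ∀ i, ‖z i‖ ≤ B := fun i => Finset.le_sup' (fun k => ‖z k‖) (Finset.mem_univ i)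
  have hB0 : 0 ≤ B := le_trans (norm_nonneg (z 0)) (hB 0)
  -- minimum separation δ
  obtain ⟨δ, hδ0, hδ1, hδ⟩ : ∃ δ, 0 < δ ∧ δ ≤ 1 ∧ ∀ i k, i ≠ k → δ ≤ ‖z i - z k‖ := by
    set S : Finset (Fin 4 × Fin 4) :=
      (Finset.univ ×ˢ Finset.univ).filter (fun p => p.1 ≠ p.2) with hS
    have hSne : S.Nonempty := ⟨(0, 1), by simp [hS]⟩
    refine ⟨min 1 (S.inf' hSne fun p => ‖z p.1 - z p.2‖), ?_, min_le_left _ _, ?_⟩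
    · apply lt_min one_pos
      rw [Finset.lt_inf'_iff]
      intro p hp
      have hne : p.1 ≠ p.2 := by simp [hS] at hp; exact hp
      exact (norm_pos_iff.mpr (sub_ne_zero.mpr (hz _ _ hne)))
    · intro i k hik
      refine le_trans (min_le_right _ _) (Finset.inf'_le (b := (i, k)) _ ?_)
      simp [hS, hik]
  -- gap γ
  obtain ⟨γ, hγ0, hγ⟩ : ∃ γ, 0 < γ ∧ ∀ i, γ ≤ J - 2 * j i := by
    refine ⟨Finset.univ.inf' Finset.univ_nonempty (fun i => J - 2 * j i), ?_, ?_⟩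
    · rw [Finset.lt_inf'_iff]; intro i _; linarith [hineq i]
    · intro i; exact Finset.inf'_le _ (Finset.mem_univ i)
  set γ' := min γ J with hγ'def
  have hγ'0 : 0 < γ' := lt_min hγ0 hJ
  set L : ℝ := Real.log (δ/2) with hLdef
  have hL0 : L < 0 := Real.log_neg (by linarith) (by linarith)
  set c₁ : ℝ := 2 * J * L with hc₁def
  rw [Filter.tendsto_atTop]
  intro C
  set T : ℝ := max (max 1 (C/J)) ((C - c₁)/γ') with hTdef
  have hT1 : (1:ℝ) ≤ T := le_trans (le_max_left _ _) (le_max_left _ _)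
  have hTCJ : C/J ≤ T := le_trans (le_max_right _ _) (le_max_left _ _)
  have hTc : (C - c₁)/γ' ≤ T := le_max_right _ _
  have hJT : C ≤ J * T := by
    rw [div_le_iff₀ hJ] at hTCJ; linarith
  have hγT : C - c₁ ≤ γ' * T := by
    rw [div_le_iff₀ hγ'0] at hTc; linarith
  set ρM : ℝ := max 1 (Real.exp (C/J)) with hρMdef
  have hρM0 : (0:ℝ) < ρM := lt_of_lt_of_le one_pos (le_max_left _ _)
  have hlogρM : C ≤ J * Real.log ρM := by
    have : C/J ≤ Real.log ρM := by
      rw [Real.le_log_iff_exp_le hρM0]; exact le_max_right _ _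
    rw [div_le_iff₀ hJ] at this; linarith
  set M : ℝ := B + ρM with hMdef
  set R : ℝ := max M T with hRdef
  rw [Filter.eventually_iff_exists_mem]
  refine ⟨(Metric.closedBall (0 : ℂ × ℝ) R)ᶜ, ?_, ?_⟩
  · rw [Filter.mem_cocompact]
    exact ⟨Metric.closedBall 0 R, isCompact_closedBall _ _, fun p hp => hp⟩
  intro p hp
  obtain ⟨x, t⟩ := p
  simp only [Set.mem_compl_iff, Metric.mem_closedBall, dist_zero_right, not_le, Prod.norm_def,
    sup_lt_iff, not_and, not_lt, Real.norm_eq_abs, lt_sup_iff] at hp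
  -- abbreviations for terms
  set Q : Fin 4 → ℝ := fun i => ((z i).re - x.re)^2 + ((z i).im - x.im)^2 with hQdef
  have hQabs : ∀ i, Q i = ‖z i - x‖ ^ 2 := by
    intro i; rw [sq_abs_eq, Complex.sub_re, Complex.sub_im]
  have hQ0 : ∀ i, 0 ≤ Q i := fun i => by positivity
  have hFval : Fpot j z (x, t) = ∑ i, j i * (Real.log (Q i + Real.exp (2*t)) - t) := rfl
  -- unconditional bound: Fpot ≥ J * t
  have hFt : J * t ≤ Fpot j z (x, t) := by
    rw [hFval, hJdef, Finset.sum_mul]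
    apply Finset.sum_le_sum
    intro i _
    exact mul_le_mul_of_nonneg_left (term_lb_self _ _ (hQ0 i)) (hj i).le
  -- bound assuming all points at distance ≥ ρ
  have hFfar : ∀ ρ, 0 < ρ → (∀ i, ρ ≤ ‖z i - x‖) →
      J * (2 * Real.log ρ - t) ≤ Fpot j z (x, t) := by
    intro ρ hρ hall
    rw [hFval, hJdef, Finset.sum_mul]
    apply Finset.sum_le_sum
    intro i _
    refine mul_le_mul_of_nonneg_left ?_ (hj i).le
    have : ρ^2 ≤ Q i := by rw [hQabs i]; exact pow_le_pow_left₀ hρ.le (hall i) 2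
    linarith [term_lb_rho (Q i) t ρ hρ this]
  by_cases hx : M ≤ ‖x‖
  · -- far from all points: |z i - x| ≥ |x| - B ≥ ρM
    have hall : ∀ i, ρM ≤ ‖z i - x‖ := by
      intro i
      have h1 : ‖x‖ - ‖z i‖ ≤ ‖z i - x‖ := by
        have := norm_sub_norm_le x (z i)
        rw [norm_sub_rev] at this
        simpa using this
      have := hB i
      simp only [hMdef] at hx
      linarith
    have h1 := hFfar ρM hρM0 hall
    have h2 := hFt
    -- average: F ≥ J log ρM ≥ C
    nlinarith [hlogρM]
  · push_neg at hx
    have hM_le_R : M ≤ R := le_max_left _ _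
    have hT_le_R : T ≤ R := le_max_right _ _
    have ht : R < |t| := by
      rcases hp with h | h
      · exfalso; linarith
      · exact h
    by_cases ht0 : 0 ≤ t
    · -- t large positive
      have : T ≤ t := by rw [abs_of_nonneg ht0] at ht; linarith
      have := hFt
      nlinarith
    · push_neg at ht0
      have htT : t ≤ -T := by rw [abs_of_neg ht0] at ht; linarith
      by_cases hnear : ∃ i, ‖z i - x‖ < δ/2
      · obtain ⟨i₀, hi₀⟩ := hnear
        have hfar : ∀ k, k ≠ i₀ → δ/2 ≤ ‖z k - x‖ := by
          intro k hk
          by_contra h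
          push_neg at h
          have h3 : ‖z k - z i₀‖ ≤ ‖z k - x‖ + ‖z i₀ - x‖ := by
            have := norm_sub_le_norm_sub_add_norm_sub (z k) x (z i₀)
            rwa [norm_sub_rev x (z i₀)] at this
          have := hδ k i₀ hk
          linarith
        -- split sum
        have hsplit : Fpot j z (x, t) =
            j i₀ * (Real.log (Q i₀ + Real.exp (2*t)) - t)
            + ∑ k ∈ Finset.univ.erase i₀, j k * (Real.log (Q k + Real.exp (2*t)) - t) := by
          rw [hFval]
          exact (Finset.add_sum_erase Finset.univ
            (fun k => j k * (Real.log (Q k + Real.exp (2*t)) - t)) (Finset.mem_univ i₀)).symm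
        have hsum_erase : ∑ k ∈ Finset.univ.erase i₀, j k = J - j i₀ :=
          Finset.sum_erase_eq_sub (Finset.mem_univ i₀)
        have hbound2 : (J - j i₀) * (2 * L - t) ≤
            ∑ k ∈ Finset.univ.erase i₀, j k * (Real.log (Q k + Real.exp (2*t)) - t) := by
          rw [← hsum_erase, Finset.sum_mul]
          apply Finset.sum_le_sum
          intro k hk
          refine mul_le_mul_of_nonneg_left ?_ (hj k).le
          have hkne : k ≠ i₀ := (Finset.mem_erase.mp hk).1
          have : (δ/2)^2 ≤ Q k := by
            rw [hQabs k]; exact pow_le_pow_left₀ (by linarith) (hfar k hkne) 2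
          exact term_lb_rho (Q k) t (δ/2) (by linarith) this
        have hbound1 : j i₀ * t ≤ j i₀ * (Real.log (Q i₀ + Real.exp (2*t)) - t) :=
          mul_le_mul_of_nonneg_left (term_lb_self _ _ (hQ0 i₀)) (hj i₀).le
        rw [hsplit]
        have hji₀ := hj i₀
        have hgap := hγ i₀
        have hγ'γ : γ' ≤ γ := min_le_left _ _
        -- RHS ≥ j i₀ * t + (J - j i₀)(2L - t) = (2 j i₀ - J) t + (J - j i₀) 2L
        -- ≥ γ' * T + c₁ ≥ C
        nlinarith [mul_le_mul_of_nonneg_right hgap (by linarith : (0:ℝ) ≤ -t - T),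
          mul_le_mul_of_nonneg_left hL0.le (by linarith : (0:ℝ) ≤ j i₀)]
      · push_neg at hnear
        have h1 := hFfar (δ/2) (by linarith) hnear
        have hγ'J : γ' ≤ J := min_le_right _ _
        -- F ≥ J(2L - t) ≥ 2JL + J T = c₁ + J*T ≥ c₁ + γ' T ≥ C
        nlinarith [mul_le_mul_of_nonneg_right hγ'J (by linarith : (0:ℝ) ≤ T)]

lemma contF (j : Fin 4 → ℝ) (z : Fin 4 → ℂ) : Continuous (Fpot j z) := by
  apply continuous_finset_sum
  intro i _
  apply Continuous.mul continuous_const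
  apply Continuous.sub _ continuous_snd
  have hQ : Continuous (fun p : ℂ × ℝ =>
      ((z i).re - p.1.re)^2 + ((z i).im - p.1.im)^2 + Real.exp (2*p.2)) := by
    fun_prop
  rw [continuous_iff_continuousAt]
  intro p
  exact (Real.continuousAt_log (by positivity)).comp hQ.continuousAt

/-- Surjectivity part of the Guillemin–Sternberg isomorphism for 4-gons: for regular `j` and
pairwise distinct `zᵢ`, some `SL(2,ℂ)` element moves the configuration onto the constraint
surface `Σᵢ jᵢ N(zᵢ^g) = 0`. -/
theorem stable_orbit_meets_constraint_surface
    (j : Fin 4 → ℝ) (hj : ∀ i, 0 < j i)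
    (hreg : ∀ ε : Fin 4 → ℝ, (∀ i, ε i = 1 ∨ ε i = -1) → ∑ i, ε i * j i ≠ 0)
    (hineq : ∀ i, 2 * j i < ∑ k, j k)
    (z : Fin 4 → ℂ) (hz : ∀ i k, i ≠ k → z i ≠ z k) :
    ∃ a b c d : ℂ, a * d - b * c = 1 ∧ (∀ i, c * z i + d ≠ 0) ∧
      ∑ i, j i • Nvec ((a * z i + b) / (c * z i + d)) = 0 := by
  classical
  obtain ⟨p₀, hmin⟩ := (contF j z).exists_forall_le (tendstoF j hj hineq z hz)
  obtain ⟨x₀, t₀⟩ := p₀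
  set s : ℝ := Real.exp t₀ with hsdef
  have hs : 0 < s := Real.exp_pos _
  set E : ℝ := Real.exp (2*t₀) with hEdef
  have hE : 0 < E := Real.exp_pos _
  have hEs : E = s^2 := by
    rw [hEdef, hsdef, two_mul, Real.exp_add, sq]
  set a : Fin 4 → ℝ := fun i => (z i).re - x₀.re with hadef
  set b : Fin 4 → ℝ := fun i => (z i).im - x₀.im with hbdef
  set A : Fin 4 → ℝ := fun i => a i^2 + b i^2 + E with hAdef
  have hA : ∀ i, 0 < A i := by
    intro i; rw [hAdef]; positivity
  -- First derivative equation (x-real direction)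
  have E1 : ∑ i, j i * (-(2 * a i) / A i) = 0 := by
    set g : ℝ → ℝ := fun u => ∑ i, j i * (Real.log ((a i - u)^2 + (b i^2 + E)) - t₀) with hgdef
    have hg : ∀ u : ℝ, Fpot j z (x₀ + (u:ℂ), t₀) = g u := by
      intro u
      rw [hgdef, Fpot]
      apply Finset.sum_congr rfl
      intro i _
      have : ((z i).re - (x₀ + (u:ℂ)).re)^2 + ((z i).im - (x₀ + (u:ℂ)).im)^2 + Real.exp (2*t₀)
          = (a i - u)^2 + (b i^2 + E) := by
        simp only [Complex.add_re, Complex.add_im, Complex.ofReal_re, Complex.ofReal_im, hadef,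
          hbdef, hEdef]
        ring
      rw [this]
    have hloc : IsLocalMin g 0 := by
      apply Filter.Eventually.of_forall
      intro u
      have h1 := hmin (x₀ + (u:ℂ), t₀)
      rw [hg u] at h1
      have h0 : Fpot j z (x₀, t₀) = g 0 := by
        have := hg 0
        simpa using this
      rw [← h0]
      exact h1
    have hd : HasDerivAt g (∑ i, j i * (-(2 * a i) / A i)) 0 := by
      apply HasDerivAt.fun_sum
      intro i _
      have h1 : HasDerivAt (fun u : ℝ => (a i - u)^2 + (b i^2 + E)) (-(2 * a i)) 0 := by
        have h := (((hasDerivAt_id (0:ℝ)).const_sub (a i)).pow 2).add_const (b i^2 + E)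
        refine h.congr_deriv ?_
        show ((2:ℕ):ℝ) * (a i - id 0) ^ (2 - 1) * -1 = -(2 * a i)
        norm_num
      have hne : (a i - 0)^2 + (b i^2 + E) ≠ 0 := by positivity
      have h2 := (h1.log hne).sub_const t₀
      have h3 := h2.const_mul (j i)
      convert h3 using 1
      congr 1
      rw [hAdef]
      simp only [sub_zero]
      ring
    have := hloc.deriv_eq_zero
    rwa [hd.deriv] at this
  -- Second derivative equation (x-imaginary direction)
  have E2 : ∑ i, j i * (-(2 * b i) / A i) = 0 := by
    set g : ℝ → ℝ := fun v => ∑ i, j i * (Real.log ((b i - v)^2 + (a i^2 + E)) - t₀) with hgdef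
    have hg : ∀ v : ℝ, Fpot j z (x₀ + (v:ℂ) * Complex.I, t₀) = g v := by
      intro v
      rw [hgdef, Fpot]
      apply Finset.sum_congr rfl
      intro i _
      have : ((z i).re - (x₀ + (v:ℂ) * Complex.I).re)^2
          + ((z i).im - (x₀ + (v:ℂ) * Complex.I).im)^2 + Real.exp (2*t₀)
          = (b i - v)^2 + (a i^2 + E) := by
        simp only [Complex.add_re, Complex.add_im, Complex.mul_re, Complex.mul_im,
          Complex.ofReal_re, Complex.ofReal_im, Complex.I_re, Complex.I_im, hadef, hbdef, hEdef]
        ring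
      rw [this]
    have hloc : IsLocalMin g 0 := by
      apply Filter.Eventually.of_forall
      intro v
      have h1 := hmin (x₀ + (v:ℂ) * Complex.I, t₀)
      rw [hg v] at h1
      have h0 : Fpot j z (x₀, t₀) = g 0 := by
        have := hg 0
        simpa using this
      rw [← h0]
      exact h1
    have hd : HasDerivAt g (∑ i, j i * (-(2 * b i) / A i)) 0 := by
      apply HasDerivAt.fun_sum
      intro i _
      have h1 : HasDerivAt (fun v : ℝ => (b i - v)^2 + (a i^2 + E)) (-(2 * b i)) 0 := by
        have h := (((hasDerivAt_id (0:ℝ)).const_sub (b i)).pow 2).add_const (a i^2 + E)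
        refine h.congr_deriv ?_
        show ((2:ℕ):ℝ) * (b i - id 0) ^ (2 - 1) * -1 = -(2 * b i)
        norm_num
      have hne : (b i - 0)^2 + (a i^2 + E) ≠ 0 := by positivity
      have h2 := (h1.log hne).sub_const t₀
      have h3 := h2.const_mul (j i)
      convert h3 using 1
      congr 1
      rw [hAdef]
      simp only [sub_zero]
      ring
    have := hloc.deriv_eq_zero
    rwa [hd.deriv] at this
  -- Third derivative equation (t direction)
  have E3 : ∑ i, j i * (E * 2 / A i - 1) = 0 := by
    set g : ℝ → ℝ := fun τ => ∑ i, j i * (Real.log ((a i^2 + b i^2) + Real.exp (2*τ)) - τ)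
      with hgdef
    have hg : ∀ τ : ℝ, Fpot j z (x₀, τ) = g τ := by
      intro τ
      rw [hgdef, Fpot]
    have hloc : IsLocalMin g t₀ := by
      apply Filter.Eventually.of_forall
      intro τ
      rw [← hg τ, ← hg t₀]
      exact hmin (x₀, τ)
    have hd : HasDerivAt g (∑ i, j i * (E * 2 / A i - 1)) t₀ := by
      apply HasDerivAt.fun_sum
      intro i _
      have h1 : HasDerivAt (fun τ : ℝ => (a i^2 + b i^2) + Real.exp (2*τ)) (E * 2) t₀ := by
        have h := (((hasDerivAt_id t₀).const_mul (2:ℝ)).exp).const_add (a i^2 + b i^2)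
        refine h.congr_deriv ?_
        show Real.exp (2 * t₀) * (2 * 1) = E * 2
        rw [hEdef]
        ring
      have hne : (a i^2 + b i^2) + Real.exp (2*t₀) ≠ 0 := by positivity
      have h2 := (h1.log hne).sub (hasDerivAt_id t₀)
      have h3 := h2.const_mul (j i)
      exact h3
    have := hloc.deriv_eq_zero
    rwa [hd.deriv] at this
  -- assemble the Möbius transformation
  set r : ℝ := Real.sqrt s with hrdef
  have hr : 0 < r := Real.sqrt_pos.mpr hs
  have hrC : (r:ℂ) ≠ 0 := Complex.ofReal_ne_zero.mpr hr.ne'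
  have hrr : (r:ℂ) * (r:ℂ) = (s:ℂ) := by
    rw [← Complex.ofReal_mul, Real.mul_self_sqrt hs.le]
  refine ⟨((r:ℂ))⁻¹, -x₀ * ((r:ℂ))⁻¹, 0, (r:ℂ), ?_, ?_, ?_⟩
  · field_simp
    simp
  · intro i; simp [hrC]
  · have hw : ∀ i, ((r:ℂ)⁻¹ * z i + -x₀ * (r:ℂ)⁻¹) / ((0:ℂ) * z i + (r:ℂ))
        = (z i - x₀) / (s:ℂ) := by
      intro i
      rw [zero_mul, zero_add, ← hrr]
      field_simp
      ring
    simp only [hw]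
    have hre : ∀ i, ((z i - x₀) / (s:ℂ)).re = a i / s := by
      intro i; rw [Complex.div_ofReal_re, Complex.sub_re, hadef]
    have him : ∀ i, ((z i - x₀) / (s:ℂ)).im = b i / s := by
      intro i; rw [Complex.div_ofReal_im, Complex.sub_im, hbdef]
    have habs : ∀ i, ‖(z i - x₀) / (s:ℂ)‖ ^ 2 = (a i^2 + b i^2) / s^2 := by
      intro i
      rw [norm_div, div_pow, Complex.sq_norm, Complex.normSq_apply, Complex.sub_re,
        Complex.sub_im, Complex.norm_real, Real.norm_eq_abs, sq_abs, hadef, hbdef]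
      ring_nf
    have hden : ∀ i, 1 + ‖(z i - x₀) / (s:ℂ)‖ ^ 2 = A i / s^2 := by
      intro i
      rw [habs, hAdef, hEs]
      field_simp
      ring
    have S0 : ∑ i, (j i • Nvec ((z i - x₀) / (s:ℂ))) (0 : Fin 3) = 0 := by
      have hterm : ∀ i ∈ Finset.univ, (j i • Nvec ((z i - x₀) / (s:ℂ))) (0 : Fin 3)
          = s * (j i * (-(2 * a i) / A i)) := by
        intro i _
        rw [Pi.smul_apply, Nvec]
        simp only [Matrix.cons_val_zero, smul_eq_mul]
        rw [hre, hden]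
        have h1 := (hA i).ne'
        field_simp
      rw [Finset.sum_congr rfl hterm, ← Finset.mul_sum, E1, mul_zero]
    have S1 : ∑ i, (j i • Nvec ((z i - x₀) / (s:ℂ))) (1 : Fin 3) = 0 := by
      have hterm : ∀ i ∈ Finset.univ, (j i • Nvec ((z i - x₀) / (s:ℂ))) (1 : Fin 3)
          = (-s) * (j i * (-(2 * b i) / A i)) := by
        intro i _
        rw [Pi.smul_apply, Nvec]
        simp only [Matrix.cons_val_one, Matrix.head_cons, Matrix.cons_val_zero, smul_eq_mul]
        rw [him, hden]
        have h1 := (hA i).ne'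
        field_simp
      rw [Finset.sum_congr rfl hterm, ← Finset.mul_sum, E2, mul_zero]
    have S2 : ∑ i, (j i • Nvec ((z i - x₀) / (s:ℂ))) (2 : Fin 3) = 0 := by
      have hterm : ∀ i ∈ Finset.univ, (j i • Nvec ((z i - x₀) / (s:ℂ))) (2 : Fin 3)
          = j i * (E * 2 / A i - 1) := by
        intro i _
        rw [Pi.smul_apply, Nvec]
        simp only [Matrix.cons_val_two, Matrix.tail_cons, Matrix.head_cons, smul_eq_mul]
        rw [hden, habs]
        have h1 := (hA i).ne'
        have h2 : A i = a i^2 + b i^2 + E := by rw [hAdef]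
        rw [hEs] at h2 ⊢
        rw [h2]
        congr 1
        field_simp
        ring
      rw [Finset.sum_congr rfl hterm, E3]
    funext k
    rw [Finset.sum_apply]
    simp only [Pi.zero_apply]
    fin_cases k
    · simpa using S0
    · simpa using S1
    · simpa using S2
end

section
/- Let j₁, j₂, j₃, j₄ be positive real numbers and z₁, z₂, z₃, z₄ ∈ ℂ with Σᵢ jᵢ N(zᵢ) = 0, and assume the vectors N(z₁),…,N(z₄) are not collinear. If g = [[a,b],[c,d]] with ad − bc = 1 satisfies c·zᵢ + d ≠ 0 for all i and Σᵢ jᵢ N((a·zᵢ + b)/(c·zᵢ + d)) = 0, then g is unitary (g*g = 1), i.e. g ∈ SU(2). (SL(2,ℂ) elements preserving the constraint surface along an orbit belong to SU(2): injectivity of the Guillemin–Sternberg isomorphism.) -/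
open Matrix

open Complex Finset

lemma nvec_norm (w : ℂ) : ∑ x, Nvec w x ^ 2 = 1 := by
  have hn : (0:ℝ) < 1 + ‖w‖ ^ 2 := by positivity
  rw [Fin.sum_univ_three]
  simp only [Nvec, Matrix.cons_val_zero, Matrix.cons_val_one, Matrix.head_cons,
    Matrix.cons_val_two, Matrix.tail_cons]
  rw [Complex.sq_norm] at *
  rw [div_pow, div_pow, div_pow, ← add_div, ← add_div,
    div_eq_one_iff_eq (by positivity)]
  have h := Complex.normSq_apply w
  ring_nf
  nlinarith [h]

lemma nvec_antipodal (w w' : ℂ) (h : w * (starRingEnd ℂ) w' = -1) :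
    Nvec w = -(Nvec w') := by
  have hR1 : w.re * w'.re + w.im * w'.im = -1 := by
    have := congrArg Complex.re h
    simpa [Complex.mul_re] using this
  have hR2 : w.im * w'.re - w.re * w'.im = 0 := by
    have := congrArg Complex.im h
    simp [Complex.mul_im] at this
    linarith
  have hnn : Complex.normSq w * Complex.normSq w' = 1 := by
    have := congrArg Complex.normSq h
    rw [_root_.map_mul, Complex.normSq_conj] at this
    simpa using this
  have e1 : w.re * Complex.normSq w' = -w'.re := by
    rw [Complex.normSq_apply]; linear_combination w'.re * hR1 - w'.im * hR2
  have e2 : w.im * Complex.normSq w' = -w'.im := by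
    rw [Complex.normSq_apply]; linear_combination w'.im * hR1 + w'.re * hR2
  have e1' : w'.re * Complex.normSq w = -w.re := by
    rw [Complex.normSq_apply]; linear_combination w.re * hR1 + w.im * hR2
  have e2' : w'.im * Complex.normSq w = -w.im := by
    rw [Complex.normSq_apply]; linear_combination w.im * hR1 - w.re * hR2
  have hp : (0:ℝ) < 1 + Complex.normSq w := by
    have := Complex.normSq_nonneg w; linarith
  have hp' : (0:ℝ) < 1 + Complex.normSq w' := by
    have := Complex.normSq_nonneg w'; linarith
  funext m
  fin_cases m <;>
    simp only [Nvec, Matrix.cons_val_zero, Matrix.cons_val_one, Matrix.head_cons, Pi.neg_apply,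
      Matrix.cons_val_two, Matrix.tail_cons, Complex.sq_norm, Fin.zero_eta, Fin.mk_one,
      Fin.isValue, Fin.reduceFinMk] <;>
    rw [← neg_div, div_eq_div_iff (ne_of_gt hp) (ne_of_gt hp')]
  · linear_combination (-2:ℝ) * e1 - 2 * e1'
  · linear_combination (2:ℝ) * e2 + 2 * e2'
  · linear_combination (-2:ℝ) * hnn

lemma nvec_div (u v : ℂ) (hv : v ≠ 0) :
    Nvec (u / v) = ![-2 * (u * (starRingEnd ℂ) v).re / (Complex.normSq u + Complex.normSq v),
      2 * (u * (starRingEnd ℂ) v).im / (Complex.normSq u + Complex.normSq v),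
      (Complex.normSq v - Complex.normSq u) / (Complex.normSq u + Complex.normSq v)] := by
  have hnv : (0:ℝ) < normSq v := Complex.normSq_pos.mpr hv
  have habs : ‖u / v‖ ^ 2 = normSq u / normSq v := by
    rw [Complex.sq_norm, map_div₀]
  have hre : (u / v).re = (u * (starRingEnd ℂ) v).re / normSq v := by
    rw [Complex.div_re, Complex.mul_re, Complex.conj_re, Complex.conj_im]; ring
  have him : (u / v).im = (u * (starRingEnd ℂ) v).im / normSq v := by
    rw [Complex.div_im, Complex.mul_im, Complex.conj_re, Complex.conj_im]; ring
  have hcomb : 1 + ‖u / v‖ ^ 2 = (normSq u + normSq v) / normSq v := by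
    rw [habs, eq_div_iff hnv.ne', add_mul, one_mul, div_mul_cancel₀ _ hnv.ne', add_comm]
  have hone : 1 - ‖u / v‖ ^ 2 = (normSq v - normSq u) / normSq v := by
    rw [habs, eq_div_iff hnv.ne', sub_mul, one_mul, div_mul_cancel₀ _ hnv.ne']
  funext m
  fin_cases m <;>
    simp only [Nvec, hre, him, hcomb, hone, Matrix.cons_val_zero, Matrix.cons_val_one,
      Matrix.head_cons, Matrix.cons_val_two, Matrix.tail_cons, Fin.zero_eta, Fin.mk_one,
      Fin.reduceFinMk, Fin.isValue, mul_div_assoc'] <;>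
    rw [div_div_div_cancel_right₀ hnv.ne']

lemma delta_nonneg (e qr qi zr zi : ℝ) :
    0 ≤ (zr^2+zi^2)*e^2 + 2*(qr*zr+qi*zi)*e*(1-(zr^2+zi^2))
      + (qr^2+qi^2)*(1+(zr^2+zi^2))^2 - (2*(qr*zr+qi*zi))^2 := by
  rcases eq_or_lt_of_le (by positivity : (0:ℝ) ≤ zr^2+zi^2) with h | h
  · have hzr : zr = 0 := by nlinarith [sq_nonneg zr, sq_nonneg zi]
    have hzi : zi = 0 := by nlinarith [sq_nonneg zr, sq_nonneg zi]
    subst hzr hzi; nlinarith [sq_nonneg qr, sq_nonneg qi]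
  · nlinarith [sq_nonneg (2*(zr^2+zi^2)*e + 2*(qr*zr+qi*zi)*(1-(zr^2+zi^2))),
      sq_nonneg (qr*zi-qi*zr), sq_nonneg (1+(zr^2+zi^2)), mul_pos h h]

lemma delta_eq_zero (e qr qi zr zi : ℝ)
    (h : (zr^2+zi^2)*e^2 + 2*(qr*zr+qi*zi)*e*(1-(zr^2+zi^2))
      + (qr^2+qi^2)*(1+(zr^2+zi^2))^2 - (2*(qr*zr+qi*zi))^2 = 0) :
    qr*zi - qi*zr = 0 ∧ 2*(zr^2+zi^2)*e + 2*(qr*zr+qi*zi)*(1-(zr^2+zi^2)) = 0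
      ∧ (zr = 0 ∧ zi = 0 → qr = 0 ∧ qi = 0) := by
  rcases eq_or_lt_of_le (by positivity : (0:ℝ) ≤ zr^2+zi^2) with hx | hx
  · have hzr : zr = 0 := by nlinarith [sq_nonneg zr, sq_nonneg zi]
    have hzi : zi = 0 := by nlinarith [sq_nonneg zr, sq_nonneg zi]
    subst hzr hzi
    have hqr : qr = 0 := by nlinarith [sq_nonneg qr, sq_nonneg qi]
    have hqi : qi = 0 := by nlinarith [sq_nonneg qr, sq_nonneg qi]
    simp [hqr, hqi]
  · have key : (2*(zr^2+zi^2)*e + 2*(qr*zr+qi*zi)*(1-(zr^2+zi^2)))^2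
        + (1+(zr^2+zi^2))^2 * (2*(qr*zi-qi*zr))^2 = 0 := by
      linear_combination 4*(zr^2+zi^2)*h
    have h1 : (2*(zr^2+zi^2)*e + 2*(qr*zr+qi*zi)*(1-(zr^2+zi^2)))^2 = 0 := by
      linarith [sq_nonneg (2*(zr^2+zi^2)*e + 2*(qr*zr+qi*zi)*(1-(zr^2+zi^2))),
        mul_nonneg (sq_nonneg (1+(zr^2+zi^2))) (sq_nonneg (2*(qr*zi-qi*zr)))]
    have h2 : (1+(zr^2+zi^2))^2 * (2*(qr*zi-qi*zr))^2 = 0 := by linarith [h1, key]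
    refine ⟨?_, ?_, ?_⟩
    · have hpos : (0:ℝ) < (1+(zr^2+zi^2))^2 := by positivity
      have := (mul_eq_zero.mp h2).resolve_left (ne_of_gt hpos)
      have := pow_eq_zero_iff (n := 2) (by norm_num) |>.mp this
      linarith
    · have := pow_eq_zero_iff (n := 2) (by norm_num) |>.mp h1
      linarith
    · rintro ⟨rfl, rfl⟩
      exfalso; nlinarith [hx]

lemma e1_point (p s2 qr qi zr zi X N T jj : ℝ) (hN : N = 1 + X)
    (hT : T = p * X + 2 * (qr * zr + qi * zi) + s2) (hN0 : N ≠ 0) :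
    jj * (T / N) = (p + s2)/2 * jj - (p - s2)/2 * (jj * ((1 - X) / N))
      - qr * (jj * (-2 * zr / N)) + qi * (jj * (2 * zi / N)) := by
  subst hT hN
  field_simp
  ring

lemma e2_point (A2 C2 PR PI NU NV WR WI N T jj ps : ℝ)
    (hN : N = C2 * NU + A2 * NV - 2 * (PR * WR - PI * WI))
    (hT : T = NU + NV) (hps : ps = A2 + C2) (hT0 : T ≠ 0) :
    jj * (N / T) = ps/2 * jj - (C2 - A2)/2 * (jj * ((NV - NU) / T))
      + PR * (jj * (-2 * WR / T)) + PI * (jj * (2 * WI / T)) := by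
  subst hN hps hT
  field_simp
  ring

lemma hrw_point (P N T : ℝ) (hN : N ≠ 0) (hT : T ≠ 0) :
    P - T / N - N / T = (P * N * T - T^2 - N^2) / (N * T) := by
  field_simp

lemma num_id (p s2 qr qi zr zi N T : ℝ) (hN : N = 1 + (zr^2 + zi^2))
    (hT : T = p * (zr^2 + zi^2) + 2 * (qr * zr + qi * zi) + s2)
    (hdet : p * s2 = 1 + (qr^2 + qi^2)) :
    (p + s2) * N * T - T^2 - N^2
      = (zr^2+zi^2)*(p - s2)^2 + 2*(qr*zr+qi*zi)*(p - s2)*(1-(zr^2+zi^2))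
        + (qr^2+qi^2)*(1+(zr^2+zi^2))^2 - (2*(qr*zr+qi*zi))^2 := by
  subst hN hT
  linear_combination (1 + (zr^2+zi^2))^2 * hdet

lemma su2_of (a b c d : ℂ)
    (h1 : ((normSq a : ℝ) : ℂ) + ((normSq c : ℝ) : ℂ) = 1)
    (h2 : ((normSq b : ℝ) : ℂ) + ((normSq d : ℝ) : ℂ) = 1)
    (hq : (starRingEnd ℂ) a * b + (starRingEnd ℂ) c * d = 0) :
    (!![a, b; c, d])ᴴ * !![a, b; c, d] = 1 := by
  have hqc : a * (starRingEnd ℂ) b + c * (starRingEnd ℂ) d = 0 := by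
    have := congrArg (starRingEnd ℂ) hq
    simpa [map_add, _root_.map_mul] using this
  ext i k
  fin_cases i <;> fin_cases k <;>
    simp [Matrix.mul_apply, Fin.sum_univ_two, Matrix.conjTranspose_apply, Matrix.one_apply]
  · rw [mul_comm ((starRingEnd ℂ) a) a, mul_comm ((starRingEnd ℂ) c) c,
      Complex.mul_conj, Complex.mul_conj]
    exact h1
  · linear_combination hq
  · linear_combination hqc
  · rw [mul_comm ((starRingEnd ℂ) b) b, mul_comm ((starRingEnd ℂ) d) d,
      Complex.mul_conj, Complex.mul_conj]
    exact h2

set_option maxHeartbeats 1600000 in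
/-- Injectivity part of the Guillemin–Sternberg isomorphism: an `SL(2,ℂ)` element mapping a
noncollinear closed configuration to a closed configuration along its orbit lies in `SU(2)`. -/
theorem sl2c_preserving_constraint_is_su2
    (j : Fin 4 → ℝ) (hj : ∀ i, 0 < j i) (z : Fin 4 → ℂ)
    (hclo : ∑ i, j i • Nvec (z i) = 0)
    (hnc : ¬ NCollinear z)
    (a b c d : ℂ) (hdet : a * d - b * c = 1)
    (hnz : ∀ i, c * z i + d ≠ 0)
    (hclo2 : ∑ i, j i • Nvec ((a * z i + b) / (c * z i + d)) = 0) :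
    (!![a, b; c, d])ᴴ * !![a, b; c, d] = 1 := by
  set p : ℝ := normSq a + normSq c with hp_def
  set s2 : ℝ := normSq b + normSq d with hs2_def
  set qc : ℂ := (starRingEnd ℂ) a * b + (starRingEnd ℂ) c * d with hqc_def
  set u : Fin 4 → ℂ := fun i => a * z i + b with hu_def
  set v : Fin 4 → ℂ := fun i => c * z i + d with hv_def
  set t : Fin 4 → ℝ := fun i => normSq (u i) + normSq (v i) with ht_def
  set n : Fin 4 → ℝ := fun i => 1 + normSq (z i) with hn_def
  set w : Fin 4 → ℂ := fun i => u i * (starRingEnd ℂ) (v i) with hw_def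
  have hv' : ∀ i, v i ≠ 0 := fun i => by rw [hv_def]; exact hnz i
  have hn' : ∀ i, (0:ℝ) < n i := fun i => by
    rw [hn_def]; have := normSq_nonneg (z i); simp only; linarith
  have ht' : ∀ i, (0:ℝ) < t i := fun i => by
    rw [ht_def]; simp only
    have h1 := normSq_nonneg (u i)
    have h2 := Complex.normSq_pos.mpr (hv' i)
    linarith
  have hnsa := normSq_nonneg a
  have hnsb := normSq_nonneg b
  have hnsc := normSq_nonneg c
  have hnsd := normSq_nonneg d
  -- determinant identity
  have hdet' : p * s2 = 1 + (qc.re ^ 2 + qc.im ^ 2) := by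
    have h1 : normSq (a * d - b * c) = 1 := by rw [hdet]; simp
    rw [hp_def, hs2_def, hqc_def]
    simp only [Complex.normSq_apply, Complex.sub_re, Complex.sub_im, Complex.mul_re,
      Complex.mul_im, Complex.add_re, Complex.add_im, Complex.conj_re, Complex.conj_im] at h1 ⊢
    nlinarith [h1]
  have hppos : 0 < p := by
    have h1 : 0 ≤ p := by rw [hp_def]; linarith
    have h2 : 0 ≤ s2 := by rw [hs2_def]; linarith
    rcases h1.lt_or_eq with h | h
    · exact h
    · exfalso; nlinarith [sq_nonneg qc.re, sq_nonneg qc.im]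
  have hs2pos : 0 < s2 := by
    have h2 : 0 ≤ s2 := by rw [hs2_def]; linarith
    rcases h2.lt_or_eq with h | h
    · exact h
    · exfalso; nlinarith [sq_nonneg qc.re, sq_nonneg qc.im]
  -- the quadratic form identities
  have tid : ∀ i, t i = p * normSq (z i) + 2 * (qc.re * (z i).re + qc.im * (z i).im) + s2 := by
    intro i
    rw [ht_def, hu_def, hv_def, hp_def, hs2_def, hqc_def]
    simp only [Complex.normSq_apply, Complex.mul_re, Complex.mul_im, Complex.add_re,
      Complex.add_im, Complex.conj_re, Complex.conj_im]
    ring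
  have nid : ∀ i, n i = (normSq c + normSq d) * normSq (u i)
      + (normSq a + normSq b) * normSq (v i)
      - 2 * (((starRingEnd ℂ) a * c + (starRingEnd ℂ) b * d).re * (w i).re
          - ((starRingEnd ℂ) a * c + (starRingEnd ℂ) b * d).im * (w i).im) := by
    intro i
    have h1 : d * u i - b * v i = z i := by
      rw [hu_def, hv_def]; simp only; linear_combination z i * hdet
    have h2 : a * v i - c * u i = 1 := by
      rw [hu_def, hv_def]; simp only; linear_combination hdet
    have h3 : n i = normSq (d * u i - b * v i) + normSq (a * v i - c * u i) := by
      rw [h1, h2, hn_def]; simp; ring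
    rw [h3, hw_def]
    simp only [Complex.normSq_apply, Complex.mul_re, Complex.mul_im, Complex.sub_re,
      Complex.sub_im, Complex.add_re, Complex.add_im, Complex.conj_re, Complex.conj_im]
    ring
  -- closure equations for the original configuration
  have H1 : ∑ i, j i * (-2 * (z i).re / n i) = 0 := by
    have := congrFun hclo 0
    simpa [Finset.sum_apply, Nvec, Complex.sq_norm, hn_def] using this
  have H2 : ∑ i, j i * (2 * (z i).im / n i) = 0 := by
    have := congrFun hclo 1
    simpa [Finset.sum_apply, Nvec, Complex.sq_norm, hn_def] using this
  have H3 : ∑ i, j i * ((1 - normSq (z i)) / n i) = 0 := by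
    have := congrFun hclo 2
    simpa [Finset.sum_apply, Nvec, Complex.sq_norm, hn_def] using this
  -- closure equations for the transformed configuration
  have hclo2' : ∑ i, j i • (![-2 * (w i).re / t i, 2 * (w i).im / t i,
      (normSq (v i) - normSq (u i)) / t i] : Fin 3 → ℝ) = 0 := by
    rw [← hclo2]
    refine Finset.sum_congr rfl fun i _ => ?_
    simp only [hw_def, ht_def, hu_def, hv_def]
    rw [nvec_div (a * z i + b) (c * z i + d) (hnz i)]
  have K1 : ∑ i, j i * (-2 * (w i).re / t i) = 0 := by
    have := congrFun hclo2' 0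
    simpa [Finset.sum_apply] using this
  have K2 : ∑ i, j i * (2 * (w i).im / t i) = 0 := by
    have := congrFun hclo2' 1
    simpa [Finset.sum_apply] using this
  have K3 : ∑ i, j i * ((normSq (v i) - normSq (u i)) / t i) = 0 := by
    have := congrFun hclo2' 2
    simpa [Finset.sum_apply] using this
  -- first moment identity
  have E1 : ∑ i, j i * (t i / n i) = (p + s2)/2 * ∑ i, j i := by
    have key : ∀ i, j i * (t i / n i) = (p + s2)/2 * j i
        - (p - s2)/2 * (j i * ((1 - normSq (z i)) / n i))
        - qc.re * (j i * (-2 * (z i).re / n i))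
        + qc.im * (j i * (2 * (z i).im / n i)) :=
      fun i => e1_point p s2 qc.re qc.im (z i).re (z i).im (normSq (z i)) (n i) (t i) (j i)
        (by rw [hn_def]) (tid i) (hn' i).ne'
    rw [Finset.sum_congr rfl fun i _ => key i]
    rw [Finset.sum_add_distrib, Finset.sum_sub_distrib, Finset.sum_sub_distrib,
      ← Finset.mul_sum, ← Finset.mul_sum, ← Finset.mul_sum, ← Finset.mul_sum,
      H1, H2, H3]
    ring
  -- second moment identity
  have E2 : ∑ i, j i * (n i / t i) = (p + s2)/2 * ∑ i, j i := by
    have key : ∀ i, j i * (n i / t i) = (p + s2)/2 * j i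
        - ((normSq c + normSq d) - (normSq a + normSq b))/2
            * (j i * ((normSq (v i) - normSq (u i)) / t i))
        + ((starRingEnd ℂ) a * c + (starRingEnd ℂ) b * d).re * (j i * (-2 * (w i).re / t i))
        + ((starRingEnd ℂ) a * c + (starRingEnd ℂ) b * d).im * (j i * (2 * (w i).im / t i)) :=
      fun i => e2_point (normSq a + normSq b) (normSq c + normSq d)
        ((starRingEnd ℂ) a * c + (starRingEnd ℂ) b * d).re
        ((starRingEnd ℂ) a * c + (starRingEnd ℂ) b * d).im
        (normSq (u i)) (normSq (v i)) ((w i).re) ((w i).im) (n i) (t i) (j i) (p + s2)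
        (nid i) (by rw [ht_def]) (by rw [hp_def, hs2_def]; ring) (ht' i).ne'
    rw [Finset.sum_congr rfl fun i _ => key i]
    rw [Finset.sum_add_distrib, Finset.sum_add_distrib, Finset.sum_sub_distrib,
      ← Finset.mul_sum, ← Finset.mul_sum, ← Finset.mul_sum, ← Finset.mul_sum,
      K1, K2, K3]
    ring
  -- master equality
  have master : ∑ i, j i * ((p + s2) - t i / n i - n i / t i) = 0 := by
    have expand : ∑ i, j i * ((p + s2) - t i / n i - n i / t i)
        = (p + s2) * (∑ i, j i) - (∑ i, j i * (t i / n i)) - (∑ i, j i * (n i / t i)) := by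
      rw [Finset.mul_sum, ← Finset.sum_sub_distrib, ← Finset.sum_sub_distrib]
      exact Finset.sum_congr rfl fun i _ => by ring
    rw [expand, E1, E2]; ring
  have hnum : ∀ i, (p + s2) * n i * t i - (t i)^2 - (n i)^2
      = ((z i).re^2+(z i).im^2)*(p - s2)^2
        + 2*(qc.re*(z i).re+qc.im*(z i).im)*(p - s2)*(1-((z i).re^2+(z i).im^2))
        + (qc.re^2+qc.im^2)*(1+((z i).re^2+(z i).im^2))^2
        - (2*(qc.re*(z i).re+qc.im*(z i).im))^2 := fun i =>
    num_id p s2 qc.re qc.im (z i).re (z i).im (n i) (t i)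
      (by rw [hn_def]; simp only [Complex.normSq_apply]; ring)
      (by rw [tid i, Complex.normSq_apply]; ring) hdet'
  have hrw : ∀ i, (p + s2) - t i / n i - n i / t i
      = ((p + s2) * n i * t i - (t i)^2 - (n i)^2) / (n i * t i) :=
    fun i => hrw_point (p + s2) (n i) (t i) (hn' i).ne' (ht' i).ne'
  have nonneg : ∀ i ∈ Finset.univ, (0:ℝ) ≤ j i * ((p + s2) - t i / n i - n i / t i) := by
    intro i _
    apply mul_nonneg (hj i).le
    rw [hrw i, hnum i]
    exact div_nonneg (delta_nonneg (p - s2) qc.re qc.im (z i).re (z i).im)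
      (mul_pos (hn' i) (ht' i)).le
  have dz : ∀ i, qc.re*(z i).im - qc.im*(z i).re = 0
      ∧ 2*((z i).re^2+(z i).im^2)*(p - s2)
          + 2*(qc.re*(z i).re+qc.im*(z i).im)*(1-((z i).re^2+(z i).im^2)) = 0
      ∧ ((z i).re = 0 ∧ (z i).im = 0 → qc.re = 0 ∧ qc.im = 0) := by
    intro i
    apply delta_eq_zero (p - s2) qc.re qc.im (z i).re (z i).im
    have hz := (Finset.sum_eq_zero_iff_of_nonneg nonneg).mp master i (Finset.mem_univ i)
    have h2 : (p + s2) - t i / n i - n i / t i = 0 := by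
      rcases mul_eq_zero.mp hz with h | h
      · exact absurd h (hj i).ne'
      · exact h
    rw [hrw i] at h2
    have h3 := (div_eq_zero_iff.mp h2).resolve_right (mul_pos (hn' i) (ht' i)).ne'
    rw [← hnum i]
    exact h3
  clear_value p s2 qc u v t n w
  clear master nonneg hrw hnum E1 E2 K1 K2 K3 H1 H2 H3 hclo2' tid nid hclo hclo2
  -- endgame
  by_cases hMain : qc.re = 0 ∧ qc.im = 0 ∧ p = s2
  · obtain ⟨hqr, hqi, hps⟩ := hMain
    rw [hqr, hqi] at hdet'
    norm_num at hdet'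
    rw [← hps] at hdet'
    have hp1 : p = 1 := by
      rcases mul_self_eq_one_iff.mp hdet' with h1 | h1
      · exact h1
      · exfalso; rw [h1] at hppos; norm_num at hppos
    have hs1 : s2 = 1 := by rw [← hps]; exact hp1
    apply su2_of
    · have hc : ((p : ℝ) : ℂ) = 1 := by rw [hp1]; norm_num
      rw [hp_def] at hc; push_cast at hc ⊢; linear_combination hc
    · have hc : ((s2 : ℝ) : ℂ) = 1 := by rw [hs1]; norm_num
      rw [hs2_def] at hc; push_cast at hc ⊢; linear_combination hc
    · have hc : qc = 0 := Complex.ext (by simpa using hqr) (by simpa using hqi)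
      rw [hqc_def] at hc; exact hc
  · exfalso
    apply hnc
    have hrel : ∀ i, z i = z 0 ∨ z i * (starRingEnd ℂ) (z 0) = -1 := by
      by_cases hq : qc.re = 0 ∧ qc.im = 0
      · -- all points are at the origin
        have hps : p ≠ s2 := fun h => hMain ⟨hq.1, hq.2, h⟩
        have hz0 : ∀ i, z i = 0 := by
          intro i
          have hB := (dz i).2.1
          rw [hq.1, hq.2] at hB
          have h2 : ((z i).re^2 + (z i).im^2) * (p - s2) = 0 := by linear_combination hB / 2
          have hX : (z i).re^2 + (z i).im^2 = 0 :=
            (mul_eq_zero.mp h2).resolve_right (sub_ne_zero.mpr hps)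
          have hzr : (z i).re = 0 := by nlinarith [sq_nonneg (z i).re, sq_nonneg (z i).im]
          have hzi : (z i).im = 0 := by nlinarith [sq_nonneg (z i).re, sq_nonneg (z i).im]
          exact Complex.ext (by simpa using hzr) (by simpa using hzi)
        intro i; left; rw [hz0 i, hz0 0]
      · -- the points lie on a line through the origin in direction qc
        have hQn : (0:ℝ) < qc.re^2 + qc.im^2 := by
          rcases not_and_or.mp hq with h | h
          · have := sq_pos_of_ne_zero h
            nlinarith [sq_nonneg qc.im]
          · have := sq_pos_of_ne_zero h
            nlinarith [sq_nonneg qc.re]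
        have hzne : ∀ i, z i ≠ 0 := by
          intro i h
          exact hq ((dz i).2.2 ⟨by rw [h]; rfl, by rw [h]; rfl⟩)
        set γ : Fin 4 → ℝ :=
          fun i => ((z i).re * qc.re + (z i).im * qc.im) / (qc.re^2 + qc.im^2) with hγ_def
        have hre : ∀ i, (z i).re = γ i * qc.re := by
          intro i
          rw [hγ_def]; simp only
          rw [div_mul_eq_mul_div, eq_div_iff hQn.ne']
          linear_combination (-qc.im) * (dz i).1
        have him : ∀ i, (z i).im = γ i * qc.im := by
          intro i
          rw [hγ_def]; simp only
          rw [div_mul_eq_mul_div, eq_div_iff hQn.ne']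
          linear_combination qc.re * (dz i).1
        have hγne : ∀ i, γ i ≠ 0 := by
          intro i h
          apply hzne i
          exact Complex.ext (by rw [hre i, h]; simp) (by rw [him i, h]; simp)
        have quad : ∀ i, (qc.re^2+qc.im^2) * (γ i)^2 - (p - s2) * (γ i) - 1 = 0 := by
          intro i
          have hB := (dz i).2.1
          rw [hre i, him i] at hB
          have hfac : 2 * γ i * (qc.re^2+qc.im^2)
              * ((qc.re^2+qc.im^2) * (γ i)^2 - (p - s2) * (γ i) - 1) = 0 := by
            linear_combination (-1 : ℝ) * hB
          rcases mul_eq_zero.mp hfac with h | h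
          · exfalso
            rcases mul_eq_zero.mp h with h' | h'
            · rcases mul_eq_zero.mp h' with h'' | h''
              · norm_num at h''
              · exact hγne i h''
            · exact hQn.ne' h'
          · exact h
        intro i
        have hstep : (γ i - γ 0) * ((qc.re^2+qc.im^2) * (γ i + γ 0) - (p - s2)) = 0 := by
          linear_combination (quad i) - (quad 0)
        rcases mul_eq_zero.mp hstep with h | h
        · left
          have hγeq : γ i = γ 0 := sub_eq_zero.mp h
          exact Complex.ext (by rw [hre i, hre 0, hγeq]) (by rw [him i, him 0, hγeq])
        · right
          have hprod : γ i * γ 0 * (qc.re^2 + qc.im^2) = -1 := by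
            linear_combination γ 0 * h - quad 0
          refine Complex.ext ?_ ?_
          · simp only [Complex.mul_re, Complex.conj_re, Complex.conj_im, Complex.neg_re,
              Complex.one_re]
            rw [hre i, him i, hre 0, him 0]
            linear_combination hprod
          · simp only [Complex.mul_im, Complex.conj_re, Complex.conj_im, Complex.neg_im,
              Complex.one_im]
            rw [hre i, him i, hre 0, him 0]
            ring
    refine ⟨Nvec (z 0), nvec_norm _, fun i => ?_⟩
    rcases hrel i with h | h
    · left; rw [h]
    · right
      rw [nvec_antipodal _ _ h]
end

section
/- Let A be a traceless 2×2 complex matrix, let z₁,…,z₄ ∈ ℂ and j₁,…,j₄ > 0. Then ∏ᵢ ⟨v(zᵢ), exp(A*)·exp(A)·v(zᵢ)⟩^{jᵢ} = exp( ∫₀¹ Σᵢ jᵢ · ⟨exp(tA)v(zᵢ), (A+A*)·exp(tA)v(zᵢ)⟩ / ‖exp(tA)v(zᵢ)‖² dt ), where both sides are positive real numbers (A* is the conjugate transpose and exp(A*)exp(A) is positive definite). (Point 3 of the paper's Proposition: the squared modulus of ρ_{e^{A}} is the exponential of the integral of the Hamiltonian H_{A−A*} along the flow.) -/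
open Matrix

/-- The unit spinor `v(z) = (1+|z|²)^(−1/2) (z,1)ᵀ ∈ ℂ²`. -/
noncomputable def vspin (z : ℂ) : Fin 2 → ℂ :=
  ![z / (Real.sqrt (1 + ‖z‖ ^ 2) : ℝ), 1 / (Real.sqrt (1 + ‖z‖ ^ 2) : ℝ)]

/-- Hermitian inner product on ℂ², conjugate-linear in the first argument. -/
def inner2 (u w : Fin 2 → ℂ) : ℂ :=
  starRingEnd ℂ (u 0) * w 0 + starRingEnd ℂ (u 1) * w 1

lemma inner2_mulVec_left (M : Matrix (Fin 2) (Fin 2) ℂ) (u w : Fin 2 → ℂ) :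
    inner2 (M.mulVec u) w = inner2 u (Mᴴ.mulVec w) := by
  simp [inner2, Matrix.mulVec, dotProduct, Fin.sum_univ_two, Matrix.conjTranspose_apply,
    _root_.map_add, _root_.map_mul]
  ring

lemma inner2_add_right (u w w' : Fin 2 → ℂ) :
    inner2 u (w + w') = inner2 u w + inner2 u w' := by
  simp [inner2]; ring

lemma inner2_eq_inner (u w : Fin 2 → ℂ) :
    inner2 u w = @inner ℂ (EuclideanSpace ℂ (Fin 2)) _
      ((EuclideanSpace.equiv (Fin 2) ℂ).symm u) ((EuclideanSpace.equiv (Fin 2) ℂ).symm w) := by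
  simp [inner2, PiLp.inner_apply, Fin.sum_univ_two, RCLike.inner_apply, mul_comm]

lemma inner2_self_re (u : Fin 2 → ℂ) :
    (inner2 u u).re = Complex.normSq (u 0) + Complex.normSq (u 1) := by
  simp [inner2, Complex.normSq_apply, Complex.mul_re, Complex.conj_re, Complex.conj_im]

lemma inner2_self_pos (u : Fin 2 → ℂ) (hu : u ≠ 0) : 0 < (inner2 u u).re := by
  rw [inner2_self_re]
  rcases eq_or_ne (u 0) 0 with h0 | h0
  · have h1 : u 1 ≠ 0 := by
      intro h1; apply hu; funext k; fin_cases k <;> simp [h0, h1]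
    have := Complex.normSq_pos.mpr h1
    nlinarith [Complex.normSq_nonneg (u 0)]
  · have := Complex.normSq_pos.mpr h0
    nlinarith [Complex.normSq_nonneg (u 1)]

lemma inner2_vspin_self (z : ℂ) : inner2 (vspin z) (vspin z) = 1 := by
  have h0 : (0:ℝ) < 1 + ‖z‖ ^ 2 := by positivity
  have hsne : (Real.sqrt (1 + ‖z‖ ^ 2) : ℂ) ≠ 0 := by
    simp [Real.sqrt_ne_zero', h0]
  simp only [inner2, vspin, Matrix.cons_val_zero, Matrix.cons_val_one, Matrix.head_cons, map_div₀,
    Complex.conj_ofReal, _root_.map_one]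
  field_simp
  rw [show (starRingEnd ℂ) z * z = ((‖z‖ ^ 2 : ℝ) : ℂ) from by
    rw [mul_comm, Complex.mul_conj, Complex.normSq_eq_norm_sq]]
  norm_cast
  rw [Real.sq_sqrt h0.le]
  ring

lemma vspin_ne_zero (z : ℂ) : vspin z ≠ 0 := by
  intro h
  have := inner2_vspin_self z
  rw [h] at this
  simp [inner2] at this

noncomputable def mulVecCLM (v : Fin 2 → ℂ) : Matrix (Fin 2) (Fin 2) ℂ →L[ℝ] (Fin 2 → ℂ) :=
  letI := Matrix.linftyOpNormedAddCommGroup (α := ℂ) (m := Fin 2) (n := Fin 2)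
  LinearMap.toContinuousLinearMap
    { toFun := fun M => M.mulVec v
      map_add' := fun M N => Matrix.add_mulVec M N v
      map_smul' := fun c M => by
        funext k
        simp [Matrix.mulVec, dotProduct, Fin.sum_univ_two, Matrix.smul_apply,
          Complex.real_smul, Pi.smul_apply]
        fin_cases k <;> simp <;> ring }

lemma flow_hasDerivAt (A : Matrix (Fin 2) (Fin 2) ℂ) (v : Fin 2 → ℂ) (t : ℝ) :
    HasDerivAt (fun s : ℝ => (NormedSpace.exp (s • A)).mulVec v)
      ((NormedSpace.exp (t • A) * A).mulVec v) t := by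
  letI := Matrix.linftyOpNormedAddCommGroup (α := ℂ) (m := Fin 2) (n := Fin 2)
  letI := Matrix.linftyOpNormedRing (α := ℂ) (n := Fin 2)
  letI := Matrix.linftyOpNormedAlgebra (R := ℝ) (α := ℂ) (n := Fin 2)
  letI := Matrix.linftyOpNormedAlgebra (R := ℂ) (α := ℂ) (n := Fin 2)
  have h1 : HasDerivAt (fun s : ℝ => NormedSpace.exp (s • A)) (NormedSpace.exp (t • A) * A) t :=
    hasDerivAt_exp_smul_const A t
  exact (mulVecCLM v).hasFDerivAt.comp_hasDerivAt t h1

lemma flow_ne_zero (A : Matrix (Fin 2) (Fin 2) ℂ) (v : Fin 2 → ℂ) (hv : v ≠ 0) (t : ℝ) :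
    (NormedSpace.exp (t • A)).mulVec v ≠ 0 := by
  intro h
  have hmul : NormedSpace.exp (-(t • A)) * NormedSpace.exp (t • A) = 1 := by
    rw [← Matrix.exp_add_of_commute (-(t • A)) (t • A)
      ((Commute.refl (t • A)).neg_left), neg_add_cancel, NormedSpace.exp_zero]
  apply hv
  calc v = (1 : Matrix (Fin 2) (Fin 2) ℂ).mulVec v := by rw [Matrix.one_mulVec]
    _ = (NormedSpace.exp (-(t • A))).mulVec ((NormedSpace.exp (t • A)).mulVec v) := by
        rw [Matrix.mulVec_mulVec, hmul]
    _ = 0 := by rw [h, Matrix.mulVec_zero]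

lemma fflow_hasDerivAt (A : Matrix (Fin 2) (Fin 2) ℂ) (v : Fin 2 → ℂ) (t : ℝ) :
    HasDerivAt (fun s : ℝ => (inner2 ((NormedSpace.exp (s • A)).mulVec v)
        ((NormedSpace.exp (s • A)).mulVec v)).re)
      ((inner2 ((NormedSpace.exp (t • A)).mulVec v)
        ((A + Aᴴ).mulVec ((NormedSpace.exp (t • A)).mulVec v))).re) t := by
  set e := EuclideanSpace.equiv (Fin 2) ℂ with he
  set g : ℝ → (Fin 2 → ℂ) := fun s => (NormedSpace.exp (s • A)).mulVec v with hg
  set g' : Fin 2 → ℂ := (NormedSpace.exp (t • A) * A).mulVec v with hg'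
  have hgd : HasDerivAt g g' t := flow_hasDerivAt A v t
  have hgE : HasDerivAt (fun s => e.symm (g s)) (e.symm g') t :=
    ((e.symm.toContinuousLinearMap.restrictScalars ℝ).hasFDerivAt.comp_hasDerivAt t hgd)
  have hinner := hgE.inner ℂ hgE
  have hre := Complex.reCLM.hasFDerivAt.comp_hasDerivAt t hinner
  have hgA : g' = A.mulVec (g t) := by
    rw [hg', hg, Matrix.mulVec_mulVec, (((Commute.refl A).smul_left t).exp_left).eq]
  convert hre using 1
  · rfl
  · rfl
  · funext s
    rw [inner2_eq_inner]
    rfl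
  · have key : inner2 (g t) ((A + Aᴴ).mulVec (g t)) =
        inner2 (g t) (A.mulVec (g t)) + inner2 (A.mulVec (g t)) (g t) := by
      rw [Matrix.add_mulVec, inner2_add_right, ← inner2_mulVec_left A (g t) (g t)]
    rw [key, Complex.reCLM_apply, hgA, Complex.add_re, Complex.add_re,
      ← inner2_eq_inner, ← inner2_eq_inner]

noncomputable def ffl (A : Matrix (Fin 2) (Fin 2) ℂ) (v : Fin 2 → ℂ) (t : ℝ) : ℝ :=
  (inner2 ((NormedSpace.exp (t • A)).mulVec v) ((NormedSpace.exp (t • A)).mulVec v)).re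

noncomputable def dfl (A : Matrix (Fin 2) (Fin 2) ℂ) (v : Fin 2 → ℂ) (t : ℝ) : ℝ :=
  (inner2 ((NormedSpace.exp (t • A)).mulVec v)
    ((A + Aᴴ).mulVec ((NormedSpace.exp (t • A)).mulVec v))).re

lemma ffl_eq (A : Matrix (Fin 2) (Fin 2) ℂ) (v : Fin 2 → ℂ) (t : ℝ) :
    (inner2 ((NormedSpace.exp (t • A)).mulVec v) ((NormedSpace.exp (t • A)).mulVec v)).re
      = ffl A v t := rfl

lemma dfl_eq (A : Matrix (Fin 2) (Fin 2) ℂ) (v : Fin 2 → ℂ) (t : ℝ) :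
    (inner2 ((NormedSpace.exp (t • A)).mulVec v)
      ((A + Aᴴ).mulVec ((NormedSpace.exp (t • A)).mulVec v))).re = dfl A v t := rfl

lemma ffl_pos (A : Matrix (Fin 2) (Fin 2) ℂ) (z : ℂ) (t : ℝ) : 0 < ffl A (vspin z) t :=
  inner2_self_pos _ (flow_ne_zero A _ (vspin_ne_zero z) t)

lemma ffl_hasDerivAt (A : Matrix (Fin 2) (Fin 2) ℂ) (v : Fin 2 → ℂ) (t : ℝ) :
    HasDerivAt (ffl A v) (dfl A v t) t := fflow_hasDerivAt A v t

lemma gfl_continuous (A : Matrix (Fin 2) (Fin 2) ℂ) (v : Fin 2 → ℂ) :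
    Continuous (fun t : ℝ => (NormedSpace.exp (t • A)).mulVec v) :=
  continuous_iff_continuousAt.mpr fun t => (flow_hasDerivAt A v t).continuousAt

lemma inner2_flow_continuous (A M : Matrix (Fin 2) (Fin 2) ℂ) (v : Fin 2 → ℂ) :
    Continuous (fun t : ℝ => (inner2 ((NormedSpace.exp (t • A)).mulVec v)
      (M.mulVec ((NormedSpace.exp (t • A)).mulVec v))).re) := by
  have hgc := gfl_continuous A v
  have h2 : Continuous fun t : ℝ => M.mulVec ((NormedSpace.exp (t • A)).mulVec v) :=
    continuous_const.matrix_mulVec hgc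
  simp only [inner2]
  exact Complex.continuous_re.comp
    (((Complex.continuous_conj.comp ((continuous_apply (0 : Fin 2)).comp hgc)).mul
        ((continuous_apply (0 : Fin 2)).comp h2)).add
      ((Complex.continuous_conj.comp ((continuous_apply (1 : Fin 2)).comp hgc)).mul
        ((continuous_apply (1 : Fin 2)).comp h2)))

lemma ffl_continuous (A : Matrix (Fin 2) (Fin 2) ℂ) (v : Fin 2 → ℂ) :
    Continuous (ffl A v) := by
  have := inner2_flow_continuous A 1 v
  simpa only [Matrix.one_mulVec, ffl_eq] using this

lemma dfl_continuous (A : Matrix (Fin 2) (Fin 2) ℂ) (v : Fin 2 → ℂ) :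
    Continuous (dfl A v) := inner2_flow_continuous A (A + Aᴴ) v

lemma ffl_zero (A : Matrix (Fin 2) (Fin 2) ℂ) (z : ℂ) : ffl A (vspin z) 0 = 1 := by
  simp [ffl, zero_smul, NormedSpace.exp_zero, Matrix.one_mulVec, inner2_vspin_self]

/-- Point 3 of the Proposition: for traceless `A`, the positive number
`∏ᵢ ⟨v(zᵢ), exp(A*) exp(A) v(zᵢ)⟩^{jᵢ}` equals the exponential of the integral over `t ∈ [0,1]`
of the Hamiltonian `H_{A−A*}` evaluated along the flow `exp(tA) v(zᵢ)`. -/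
theorem rho_sq_eq_exp_integral_hamiltonian
    (A : Matrix (Fin 2) (Fin 2) ℂ) (hA : A.trace = 0)
    (z : Fin 4 → ℂ) (j : Fin 4 → ℝ) (hj : ∀ i, 0 < j i) :
    (∏ i, ((inner2 (vspin (z i))
        ((NormedSpace.exp Aᴴ * NormedSpace.exp A).mulVec (vspin (z i)))).re) ^ (j i)) =
      Real.exp (∫ t in (0:ℝ)..1, ∑ i, j i *
        ((inner2 ((NormedSpace.exp (t • A)).mulVec (vspin (z i)))
            ((A + Aᴴ).mulVec ((NormedSpace.exp (t • A)).mulVec (vspin (z i))))).re /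
          (inner2 ((NormedSpace.exp (t • A)).mulVec (vspin (z i)))
            ((NormedSpace.exp (t • A)).mulVec (vspin (z i)))).re)) := by
  have hf1 : ∀ i, (inner2 (vspin (z i))
      ((NormedSpace.exp Aᴴ * NormedSpace.exp A).mulVec (vspin (z i)))).re
        = ffl A (vspin (z i)) 1 := by
    intro i
    have h : (NormedSpace.exp Aᴴ * NormedSpace.exp A).mulVec (vspin (z i)) =
        (NormedSpace.exp A)ᴴ.mulVec ((NormedSpace.exp A).mulVec (vspin (z i))) := by
      rw [← Matrix.mulVec_mulVec, Matrix.exp_conjTranspose]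
    rw [h, ← inner2_mulVec_left]
    simp [ffl, one_smul]
  simp only [dfl_eq, ffl_eq, hf1]
  have hF : ∀ t : ℝ, HasDerivAt (fun s => ∑ i, j i * Real.log (ffl A (vspin (z i)) s))
      (∑ i, j i * (dfl A (vspin (z i)) t / ffl A (vspin (z i)) t)) t := by
    intro t
    apply HasDerivAt.fun_sum
    intro i _
    exact ((ffl_hasDerivAt A (vspin (z i)) t).log (ffl_pos A (z i) t).ne').const_mul (j i)
  have hInt : IntervalIntegrable
      (fun t => ∑ i, j i * (dfl A (vspin (z i)) t / ffl A (vspin (z i)) t))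
      MeasureTheory.volume 0 1 := by
    apply Continuous.intervalIntegrable
    exact continuous_finset_sum _ fun i _ => continuous_const.mul
      ((dfl_continuous A (vspin (z i))).div (ffl_continuous A (vspin (z i)))
        fun t => (ffl_pos A (z i) t).ne')
  have hint : (∫ t in (0:ℝ)..1, ∑ i, j i * (dfl A (vspin (z i)) t / ffl A (vspin (z i)) t)) =
      (∑ i, j i * Real.log (ffl A (vspin (z i)) 1)) -
        (∑ i, j i * Real.log (ffl A (vspin (z i)) 0)) :=
    intervalIntegral.integral_eq_sub_of_hasDerivAt (fun t _ => hF t) hInt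
  rw [hint]
  have h0 : (∑ i, j i * Real.log (ffl A (vspin (z i)) 0)) = 0 := by
    simp [ffl_zero]
  rw [h0, sub_zero, Real.exp_sum]
  refine Finset.prod_congr rfl fun i _ => ?_
  rw [Real.rpow_def_of_pos (ffl_pos A (z i) 1), mul_comm]
end

section
/- Let j₁, j₂, j₃, j₄ be positive real numbers with Σᵢ εᵢ jᵢ ≠ 0 for every choice of signs εᵢ ∈ {+1,−1} (regularity), and let N₁, N₂, N₃, N₄ ∈ ℝ³ be unit vectors with j₁N₁ + j₂N₂ + j₃N₃ + j₄N₄ = 0. If R ∈ SO(3) satisfies R·Nᵢ = Nᵢ for all i ∈ {1,2,3,4}, then R is the identity. (For regular j⃗ the rotation group acts freely on the constraint surface H⁻¹(0).) -/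
open Matrix

lemma mulVec_dot_aux (R : Matrix (Fin 3) (Fin 3) ℝ) (hR : Rᵀ * R = 1)
    (x y : Fin 3 → ℝ) : R.mulVec x ⬝ᵥ R.mulVec y = x ⬝ᵥ y := by
  rw [Matrix.dotProduct_mulVec, ← Matrix.mulVec_transpose, Matrix.mulVec_mulVec, hR,
    Matrix.one_mulVec]

lemma self_dot_zero_aux (z : Fin 3 → ℝ) (h : z ⬝ᵥ z = 0) : z = 0 := by
  simp only [dotProduct, Fin.sum_univ_three] at h
  have h0 : z 0 * z 0 = 0 := by nlinarith [mul_self_nonneg (z 0), mul_self_nonneg (z 1), mul_self_nonneg (z 2)]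
  have h1 : z 1 * z 1 = 0 := by nlinarith [mul_self_nonneg (z 0), mul_self_nonneg (z 1), mul_self_nonneg (z 2)]
  have h2 : z 2 * z 2 = 0 := by nlinarith [mul_self_nonneg (z 0), mul_self_nonneg (z 1), mul_self_nonneg (z 2)]
  funext i
  fin_cases i
  · simpa using mul_self_eq_zero.mp h0
  · simpa using mul_self_eq_zero.mp h1
  · simpa using mul_self_eq_zero.mp h2

lemma fix_two_aux (R : Matrix (Fin 3) (Fin 3) ℝ) (hR : Rᵀ * R = 1) (hdet : R.det = 1)
    (u v : Fin 3 → ℝ) (hu : R.mulVec u = u) (hv : R.mulVec v = v)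
    (hw : u ⨯₃ v ≠ 0) : R = 1 := by
  set w := u ⨯₃ v with hwdef
  have hww : w ⬝ᵥ w ≠ 0 := fun h => hw (self_dot_zero_aux w h)
  have rowmul : ∀ (a b c : Fin 3 → ℝ),
      (Matrix.of ![a, b, c]) * Rᵀ = Matrix.of ![R.mulVec a, R.mulVec b, R.mulVec c] := by
    intro a b c
    ext i k
    fin_cases i <;>
      simp [Matrix.mul_apply, Matrix.mulVec, dotProduct, mul_comm]
  have hdetM : (Matrix.of ![w, u, v]).det = w ⬝ᵥ w :=
    (triple_product_eq_det w u v).symm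
  have hRw : R.mulVec w = w := by
    have h1 : R.mulVec w ⬝ᵥ R.mulVec w = w ⬝ᵥ w := mulVec_dot_aux R hR w w
    have h2 : R.mulVec w ⬝ᵥ w = w ⬝ᵥ w := by
      have hdet2 : (Matrix.of ![R.mulVec w, R.mulVec u, R.mulVec v]).det = w ⬝ᵥ w := by
        rw [← rowmul, Matrix.det_mul, Matrix.det_transpose, hdet, mul_one, hdetM]
      rw [hu, hv] at hdet2
      exact (triple_product_eq_det (R.mulVec w) u v).trans hdet2
    have h3 : (R.mulVec w - w) ⬝ᵥ (R.mulVec w - w) = 0 := by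
      rw [sub_dotProduct, dotProduct_sub, dotProduct_sub, h1, h2,
        dotProduct_comm w (R.mulVec w), h2]
      ring
    have h4 := self_dot_zero_aux _ h3
    exact sub_eq_zero.mp h4
  set M : Matrix (Fin 3) (Fin 3) ℝ := Matrix.of ![w, u, v] with hMdef
  have hM : M * Rᵀ = M := by
    rw [hMdef, rowmul, hRw, hu, hv]
  have hMu : IsUnit M.det := by
    rw [hMdef, hdetM]; exact isUnit_iff_ne_zero.mpr hww
  have hRT : Rᵀ = 1 := by
    calc Rᵀ = (M⁻¹ * M) * Rᵀ := by rw [Matrix.nonsing_inv_mul _ hMu, Matrix.one_mul]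
      _ = M⁻¹ * (M * Rᵀ) := by rw [Matrix.mul_assoc]
      _ = M⁻¹ * M := by rw [hM]
      _ = 1 := Matrix.nonsing_inv_mul _ hMu
  calc R = Rᵀᵀ := (Matrix.transpose_transpose R).symm
    _ = 1 := by rw [hRT, Matrix.transpose_one]

/-- For regular `j⃗` the rotation group acts freely on the constraint surface: any `R ∈ SO(3)`
fixing all four unit vectors of a closed configuration is the identity. -/
theorem so3_acts_freely_on_constraint_surface
    (j : Fin 4 → ℝ) (hj : ∀ i, 0 < j i)
    (hreg : ∀ ε : Fin 4 → ℝ, (∀ i, ε i = 1 ∨ ε i = -1) → ∑ i, ε i * j i ≠ 0)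
    (N : Fin 4 → Fin 3 → ℝ) (hN : ∀ i, ∑ x, N i x ^ 2 = 1)
    (hclo : ∑ i, j i • N i = 0)
    (R : Matrix (Fin 3) (Fin 3) ℝ) (hR : Rᵀ * R = 1) (hdet : R.det = 1)
    (hfix : ∀ i, R.mulVec (N i) = N i) :
    R = 1 := by
  by_cases hcr : ∃ a b : Fin 4, N a ⨯₃ N b ≠ 0
  · obtain ⟨a, b, hab⟩ := hcr
    exact fix_two_aux R hR hdet (N a) (N b) (hfix a) (hfix b) hab
  · push_neg at hcr
    exfalso
    set ε : Fin 4 → ℝ := fun i => N 0 ⬝ᵥ N i with hε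
    have unit : ∀ i, N i 0 * N i 0 + N i 1 * N i 1 + N i 2 * N i 2 = 1 := by
      intro i
      have := hN i
      simp only [Fin.sum_univ_three, sq] at this
      linarith
    have key : ∀ i, (ε i = 1 ∨ ε i = -1) ∧ N i = ε i • N 0 := by
      intro i
      have hc := hcr 0 i
      have e0 : N 0 1 * N i 2 - N 0 2 * N i 1 = 0 := by
        have := congrFun hc 0; simpa [cross_apply] using this
      have e1 : N 0 2 * N i 0 - N 0 0 * N i 2 = 0 := by
        have := congrFun hc 1; simpa [cross_apply] using this
      have e2 : N 0 0 * N i 1 - N 0 1 * N i 0 = 0 := by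
        have := congrFun hc 2; simpa [cross_apply] using this
      have hu' := unit 0
      have hv' := unit i
      have hd : ε i = N 0 0 * N i 0 + N 0 1 * N i 1 + N 0 2 * N i 2 := by
        simp [hε, dotProduct, Fin.sum_univ_three]
      refine ⟨?_, ?_⟩
      · have hsq : ε i ^ 2 = 1 := by
          rw [hd]
          linear_combination (N i 0 * N i 0 + N i 1 * N i 1 + N i 2 * N i 2) * hu' + hv'
            - (N 0 1 * N i 2 - N 0 2 * N i 1) * e0
            - (N 0 2 * N i 0 - N 0 0 * N i 2) * e1
            - (N 0 0 * N i 1 - N 0 1 * N i 0) * e2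
        have : (ε i - 1) * (ε i + 1) = 0 := by linear_combination hsq
        rcases mul_eq_zero.mp this with h | h
        · left; linarith
        · right; linarith
      · funext x
        fin_cases x
        · show N i 0 = (ε i • N 0) 0
          simp only [Pi.smul_apply, smul_eq_mul]
          rw [hd]
          linear_combination (- N 0 1) * e2 + N 0 2 * e1 - N i 0 * hu'
        · show N i 1 = (ε i • N 0) 1
          simp only [Pi.smul_apply, smul_eq_mul]
          rw [hd]
          linear_combination (- N 0 2) * e0 + N 0 0 * e2 - N i 1 * hu'
        · show N i 2 = (ε i • N 0) 2
          simp only [Pi.smul_apply, smul_eq_mul]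
          rw [hd]
          linear_combination (- N 0 0) * e1 + N 0 1 * e0 - N i 2 * hu'
    have hN0 : N 0 ≠ 0 := by
      intro h
      have := unit 0
      rw [h] at this
      simp at this
    have hsum : (∑ i, ε i * j i) • N 0 = 0 := by
      have : ∑ i, j i • N i = (∑ i, ε i * j i) • N 0 := by
        rw [Finset.sum_smul]
        apply Finset.sum_congr rfl
        intro i _
        rw [(key i).2, smul_smul, mul_comm]
      rw [← this, hclo]
    have hzero : (∑ i, ε i * j i) = 0 := by
      rcases smul_eq_zero.mp hsum with h | h
      · exact h
      · exact absurd h hN0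
    exact hreg ε (fun i => (key i).1) hzero
end

section
/- Let X₁, X₂, X₃, X₄ ∈ ℝ³ with X₁+X₂+X₃+X₄ = 0 and V(X) := det(X₁,X₂,X₃) ≠ 0, and let ℓ¹, ℓ², ℓ³, ℓ⁴ be the dual tetrad vectors defined by ℓ¹ = (X₂×X₃ + X₃×X₄ + X₄×X₂)/(4V(X)) and its cyclic analogues. Set V(ℓ) := det(ℓ¹,ℓ²,ℓ³). Then V(X)·V(ℓ) = 1/4, and the dual relation X₁ = (ℓ²×ℓ³ + ℓ³×ℓ⁴ + ℓ⁴×ℓ²)/(4V(ℓ)) holds (and similarly for X₂, X₃, X₄ with the corresponding cyclic sums of cross products of the other three ℓ's). -/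
open Matrix

/-- Determinant of the 3×3 matrix with columns `a`, `b`, `c`. -/
noncomputable def det3 (a b c : Fin 3 → ℝ) : ℝ := (Matrix.of ![a, b, c])ᵀ.det

/-- The dual tetrad `ℓⁱ = (1/4V) εⁱʲᵏˡ u_j [X_k, X_l]` (with `u = (1/2)(1,1,1,1)`),
written out via cross products (0-indexed: `ℓ¹ = dualTetrad X 0`, etc.). -/
noncomputable def dualTetrad (X : Fin 4 → Fin 3 → ℝ) : Fin 4 → Fin 3 → ℝ :=
  (4 * det3 (X 0) (X 1) (X 2))⁻¹ •
    ![(X 1) ⨯₃ (X 2) + (X 2) ⨯₃ (X 3) + (X 3) ⨯₃ (X 1),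
      (X 2) ⨯₃ (X 0) + (X 0) ⨯₃ (X 3) + (X 3) ⨯₃ (X 2),
      (X 0) ⨯₃ (X 1) + (X 1) ⨯₃ (X 3) + (X 3) ⨯₃ (X 0),
      (X 1) ⨯₃ (X 0) + (X 0) ⨯₃ (X 2) + (X 2) ⨯₃ (X 1)]

/-- The dual tetrad vectors always sum to zero. -/
theorem dualTetrad_sum (Y : Fin 4 → Fin 3 → ℝ) : ∑ i, dualTetrad Y i = 0 := by
  funext j
  rw [Finset.sum_apply]
  fin_cases j <;>
  · simp only [Fin.sum_univ_four, dualTetrad, cross_apply, Matrix.cons_val_zero,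
      Matrix.cons_val_one, Matrix.head_cons, Matrix.cons_val_two, Matrix.tail_cons,
      Matrix.cons_val_three, Pi.add_apply, Pi.smul_apply, smul_eq_mul, Pi.zero_apply,
      Fin.isValue, Fin.zero_eta, Fin.mk_one, Fin.reduceFinMk]
    ring

/-- Auxiliary: `V(ℓ) = 1/(4 V(X))`. -/
theorem dualTetrad_detAux (X : Fin 4 → Fin 3 → ℝ) (hclo : ∑ i, X i = 0)
    (hV : det3 (X 0) (X 1) (X 2) ≠ 0) :
    det3 (dualTetrad X 0) (dualTetrad X 1) (dualTetrad X 2) =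
      (4 * det3 (X 0) (X 1) (X 2))⁻¹ := by
  have h3 : ∀ j, X 3 j = -(X 0 j + X 1 j + X 2 j) := by
    intro j
    have := congrFun hclo j
    simp [Fin.sum_univ_four] at this
    linarith
  simp only [det3, Matrix.det_fin_three, Matrix.transpose_apply, Matrix.of_apply,
    Matrix.cons_val', Matrix.cons_val_zero, Matrix.cons_val_one, Matrix.head_cons,
    Matrix.cons_val_two, Matrix.tail_cons, Matrix.empty_val', Matrix.cons_val_fin_one,
    Matrix.head_fin_const] at hV
  simp only [det3, dualTetrad, Matrix.det_fin_three, cross_apply, Matrix.transpose_apply,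
    Matrix.of_apply, Matrix.cons_val', Matrix.cons_val_zero, Matrix.cons_val_one,
    Matrix.head_cons, Matrix.cons_val_two, Matrix.tail_cons, Matrix.empty_val',
    Matrix.cons_val_fin_one, Matrix.head_fin_const, Pi.add_apply, Pi.smul_apply,
    smul_eq_mul, h3]
  generalize hD : X 0 0 * X 1 1 * X 2 2 - X 0 0 * X 2 1 * X 1 2 - X 1 0 * X 0 1 * X 2 2 + X 1 0 * X 2 1 * X 0 2 + X 2 0 * X 0 1 * X 1 2 - X 2 0 * X 1 1 * X 0 2 = D at hV ⊢
  field_simp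
  subst hD
  ring

set_option maxHeartbeats 2000000 in
/-- `V(X)·V(ℓ) = 1/4`, and the duality relation: applying the dual-tetrad construction to the
`ℓ`'s recovers the `X`'s, e.g. `X₁ = (ℓ²×ℓ³ + ℓ³×ℓ⁴ + ℓ⁴×ℓ²)/(4V(ℓ))`. -/
theorem dualTetrad_involutive
    (X : Fin 4 → Fin 3 → ℝ) (hclo : ∑ i, X i = 0)
    (hV : det3 (X 0) (X 1) (X 2) ≠ 0) :
    det3 (X 0) (X 1) (X 2) *
      det3 (dualTetrad X 0) (dualTetrad X 1) (dualTetrad X 2) = 1 / 4 ∧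
    dualTetrad (dualTetrad X) = X := by
  have hVl := dualTetrad_detAux X hclo hV
  refine ⟨by rw [hVl]; field_simp, ?_⟩
  have h3 : ∀ j, X 3 j = -(X 0 j + X 1 j + X 2 j) := by
    intro j
    have := congrFun hclo j
    simp [Fin.sum_univ_four] at this
    linarith
  have hVs := hV
  simp only [det3, Matrix.det_fin_three, Matrix.transpose_apply, Matrix.of_apply,
    Matrix.cons_val', Matrix.cons_val_zero, Matrix.cons_val_one, Matrix.head_cons,
    Matrix.cons_val_two, Matrix.tail_cons, Matrix.empty_val', Matrix.cons_val_fin_one,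
    Matrix.head_fin_const] at hVs
  have hrow : ∀ k : Fin 4, k ≠ 3 → ∀ j : Fin 3,
      dualTetrad (dualTetrad X) k j = X k j := by
    intro k hk j
    rw [dualTetrad, hVl]
    fin_cases k
    on_goal 4 => exact absurd rfl hk
    all_goals
      fin_cases j <;>
        (simp only [dualTetrad, det3, Matrix.det_fin_three, cross_apply, Matrix.transpose_apply,
          Matrix.of_apply, Matrix.cons_val', Matrix.cons_val_zero, Matrix.cons_val_one,
          Matrix.head_cons, Matrix.cons_val_two, Matrix.tail_cons, Matrix.empty_val',
          Matrix.cons_val_fin_one, Matrix.head_fin_const, Pi.add_apply, Pi.smul_apply,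
          smul_eq_mul, Fin.isValue, Fin.zero_eta, Fin.mk_one, Fin.reduceFinMk, h3,
          Matrix.cons_val_three];
         generalize hD : X 0 0 * X 1 1 * X 2 2 - X 0 0 * X 2 1 * X 1 2 - X 1 0 * X 0 1 * X 2 2 + X 1 0 * X 2 1 * X 0 2 + X 2 0 * X 0 1 * X 1 2 - X 2 0 * X 1 1 * X 0 2 = D at hVs ⊢;
         field_simp;
         subst hD;
         ring)
  have hsum := dualTetrad_sum (dualTetrad X)
  funext i j
  fin_cases i
  · exact hrow 0 (by decide) j
  · exact hrow 1 (by decide) j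
  · exact hrow 2 (by decide) j
  · have hs := congrFun hsum j
    rw [Finset.sum_apply] at hs
    have hc := congrFun hclo j
    rw [Finset.sum_apply] at hc
    simp only [Fin.sum_univ_four, Pi.zero_apply] at hs hc
    have e0 := hrow 0 (by decide) j
    have e1 := hrow 1 (by decide) j
    have e2 := hrow 2 (by decide) j
    show dualTetrad (dualTetrad X) 3 j = X 3 j
    linarith
end

section
/- Let X₁, X₂, X₃, X₄ ∈ ℝ³ with X₁+X₂+X₃+X₄ = 0 and V(X) := det(X₁,X₂,X₃) ≠ 0, let ℓ¹,…,ℓ⁴ be the dual tetrad vectors, let ε := sign(V(X)), and define the edge vectors Lⁱʲ := √|V(X)| · (ℓⁱ − ℓʲ). Then V(L) := det(L¹⁴, L²⁴, L³⁴) = ε·√|V(X)| and X₁ = ε·(L²⁴ × L³⁴). (The area normal vectors of the tetrahedron are recovered as cross products of its edge vectors.) -/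
open Matrix

/-- Edge vectors of the tetrahedron: `Lⁱʲ = √|V(X)| (ℓⁱ − ℓʲ)`. -/
noncomputable def edgeVec (X : Fin 4 → Fin 3 → ℝ) (i k : Fin 4) : Fin 3 → ℝ :=
  Real.sqrt |det3 (X 0) (X 1) (X 2)| • (dualTetrad X i - dualTetrad X k)

lemma det3_eq (a b c : Fin 3 → ℝ) : det3 a b c =
    a 0 * (b 1 * c 2) - a 0 * (b 2 * c 1) - a 1 * (b 0 * c 2) + a 1 * (b 2 * c 0)
      + a 2 * (b 0 * c 1) - a 2 * (b 1 * c 0) := by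
  rw [det3, Matrix.det_transpose]; simp [Matrix.det_fin_three]; ring

lemma det3_smul (r : ℝ) (u v w : Fin 3 → ℝ) :
    det3 (r • u) (r • v) (r • w) = r ^ 3 * det3 u v w := by
  simp only [det3_eq, Pi.smul_apply, smul_eq_mul]; ring

lemma smul_cross_smul (r r' : ℝ) (u v : Fin 3 → ℝ) :
    (r • u) ⨯₃ (r' • v) = (r * r') • (u ⨯₃ v) := by
  funext i; fin_cases i <;> · simp [cross_apply]; ring

lemma key1 (a b c : Fin 3 → ℝ) :
    det3 (b ⨯₃ c + c ⨯₃ (-(a+b+c)) + (-(a+b+c)) ⨯₃ b - (b ⨯₃ a + a ⨯₃ c + c ⨯₃ b))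
         (c ⨯₃ a + a ⨯₃ (-(a+b+c)) + (-(a+b+c)) ⨯₃ c - (b ⨯₃ a + a ⨯₃ c + c ⨯₃ b))
         (a ⨯₃ b + b ⨯₃ (-(a+b+c)) + (-(a+b+c)) ⨯₃ a - (b ⨯₃ a + a ⨯₃ c + c ⨯₃ b))
      = 64 * (det3 a b c)^2 := by
  simp only [det3_eq, cross_apply, Pi.sub_apply, Pi.add_apply, Pi.neg_apply,
    Matrix.cons_val_zero, Matrix.cons_val_one, Matrix.head_cons, Matrix.cons_val_two,
    Matrix.tail_cons]
  ring

lemma key2 (a b c : Fin 3 → ℝ) :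
    ((c ⨯₃ a + a ⨯₃ (-(a+b+c)) + (-(a+b+c)) ⨯₃ c - (b ⨯₃ a + a ⨯₃ c + c ⨯₃ b)) ⨯₃
     (a ⨯₃ b + b ⨯₃ (-(a+b+c)) + (-(a+b+c)) ⨯₃ a - (b ⨯₃ a + a ⨯₃ c + c ⨯₃ b)))
      = (16 * det3 a b c) • a := by
  funext i
  fin_cases i <;>
  · simp [det3_eq, cross_apply]
    ring

/-- The edge vectors satisfy `V(L) = det(L¹⁴,L²⁴,L³⁴) = ε √|V(X)|` with `ε = sign V(X)`, and
the area normals are recovered as cross products of edge vectors: `X₁ = ε L²⁴ × L³⁴`. -/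
theorem areaNormal_from_edgeVectors
    (X : Fin 4 → Fin 3 → ℝ) (hclo : ∑ i, X i = 0)
    (hV : det3 (X 0) (X 1) (X 2) ≠ 0) :
    det3 (edgeVec X 0 3) (edgeVec X 1 3) (edgeVec X 2 3) =
      Real.sign (det3 (X 0) (X 1) (X 2)) * Real.sqrt |det3 (X 0) (X 1) (X 2)| ∧
    X 0 = Real.sign (det3 (X 0) (X 1) (X 2)) • ((edgeVec X 1 3) ⨯₃ (edgeVec X 2 3)) := by
  set V := det3 (X 0) (X 1) (X 2) with hVdef
  set s := Real.sqrt |V| with hsdef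
  have hs2 : s ^ 2 = |V| := Real.sq_sqrt (abs_nonneg V)
  have hX3 : X 3 = -(X 0 + X 1 + X 2) := by
    rw [Fin.sum_univ_four] at hclo
    funext i
    have := congrFun hclo i
    simp only [Pi.add_apply, Pi.zero_apply] at this
    simp only [Pi.neg_apply, Pi.add_apply]
    linarith
  -- edgeVec as scalar multiple
  have hedge : ∀ i : Fin 4, edgeVec X i 3 =
      (s * (4 * V)⁻¹) •
        (![(X 1) ⨯₃ (X 2) + (X 2) ⨯₃ (X 3) + (X 3) ⨯₃ (X 1),
          (X 2) ⨯₃ (X 0) + (X 0) ⨯₃ (X 3) + (X 3) ⨯₃ (X 2),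
          (X 0) ⨯₃ (X 1) + (X 1) ⨯₃ (X 3) + (X 3) ⨯₃ (X 0),
          (X 1) ⨯₃ (X 0) + (X 0) ⨯₃ (X 2) + (X 2) ⨯₃ (X 1)] i -
         ((X 1) ⨯₃ (X 0) + (X 0) ⨯₃ (X 2) + (X 2) ⨯₃ (X 1))) := by
    intro i
    rw [edgeVec, dualTetrad]
    rw [← hVdef, ← hsdef]
    simp only [Pi.smul_apply]
    rw [← smul_sub, smul_smul]
    simp
  have e0 := hedge 0
  have e1 := hedge 1
  have e2 := hedge 2
  simp only [Matrix.cons_val_zero, Matrix.cons_val_one, Matrix.head_cons,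
    Matrix.cons_val_two, Matrix.tail_cons] at e0 e1 e2
  rw [hX3] at e0 e1 e2
  have hd : det3 (edgeVec X 0 3) (edgeVec X 1 3) (edgeVec X 2 3) =
      (s * (4 * V)⁻¹) ^ 3 * (64 * V ^ 2) := by
    rw [e0, e1, e2, det3_smul, key1 (X 0) (X 1) (X 2), ← hVdef]
  have hc : (edgeVec X 1 3) ⨯₃ (edgeVec X 2 3) =
      ((s * (4 * V)⁻¹) ^ 2 * (16 * V)) • X 0 := by
    rw [e1, e2, smul_cross_smul, key2 (X 0) (X 1) (X 2), ← hVdef, smul_smul]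
    ring_nf
  rcases lt_or_gt_of_ne hV with hneg | hpos
  · have habs : |V| = -V := abs_of_neg hneg
    have hsign : Real.sign V = -1 := Real.sign_of_neg hneg
    have hs2' : s ^ 2 = -V := by rw [hs2, habs]
    constructor
    · rw [hd, hsign]
      have : s ^ 3 = -V * s := by
        rw [← hs2']; ring
      field_simp
      linear_combination 64 * this
    · rw [hc, hsign, smul_smul]
      have : (s * (4 * V)⁻¹) ^ 2 * (16 * V) = -1 := by
        field_simp
        linear_combination 16 * hs2'
      rw [this]
      norm_num
  · have habs : |V| = V := abs_of_pos hpos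
    have hsign : Real.sign V = 1 := Real.sign_of_pos hpos
    have hs2' : s ^ 2 = V := by rw [hs2, habs]
    constructor
    · rw [hd, hsign]
      have : s ^ 3 = V * s := by
        rw [← hs2']; ring
      field_simp
      linear_combination 64 * this
    · rw [hc, hsign, smul_smul]
      have : (s * (4 * V)⁻¹) ^ 2 * (16 * V) = 1 := by
        field_simp
        linear_combination 16 * hs2'
      rw [this]
      norm_num
end

section
/- Let z₁, z₂, z₃, z₄ ∈ ℂ be pairwise distinct and let j₁,…,j₄ > 0 satisfy the closure constraint Σᵢ jᵢ N(zᵢ) = 0. Then det(N(z₁), N(z₂), N(z₃)) = 0 if and only if the cross-ratio Z(z₁,z₂,z₃,z₄) is real. (A closed configuration corresponds to a degenerate, zero-volume tetrahedron exactly when its cross-ratio is real; nondegenerate tetrahedra are parametrized by ℂ∖ℝ.) -/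
open Matrix

private theorem det_fin_four' {R : Type*} [CommRing R] (M : Matrix (Fin 4) (Fin 4) R) :
    M.det =
      M 0 0 * (M 1 1 * (M 2 2 * M 3 3 - M 2 3 * M 3 2) - M 1 2 * (M 2 1 * M 3 3 - M 2 3 * M 3 1)
          + M 1 3 * (M 2 1 * M 3 2 - M 2 2 * M 3 1))
      - M 0 1 * (M 1 0 * (M 2 2 * M 3 3 - M 2 3 * M 3 2) - M 1 2 * (M 2 0 * M 3 3 - M 2 3 * M 3 0)
          + M 1 3 * (M 2 0 * M 3 2 - M 2 2 * M 3 0))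
      + M 0 2 * (M 1 0 * (M 2 1 * M 3 3 - M 2 3 * M 3 1) - M 1 1 * (M 2 0 * M 3 3 - M 2 3 * M 3 0)
          + M 1 3 * (M 2 0 * M 3 1 - M 2 1 * M 3 0))
      - M 0 3 * (M 1 0 * (M 2 1 * M 3 2 - M 2 2 * M 3 1) - M 1 1 * (M 2 0 * M 3 2 - M 2 2 * M 3 0)
          + M 1 2 * (M 2 0 * M 3 1 - M 2 1 * M 3 0)) := by
  rw [Matrix.det_succ_row_zero, Fin.sum_univ_four]
  simp [Matrix.det_fin_three, Matrix.submatrix_apply, Fin.succAbove, Fin.lt_def,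
    show (Fin.succ 2 : Fin 4) = 3 from rfl, show ((3:Fin 4) : ℕ) = 3 from rfl,
    show (Fin.castSucc 2 : Fin 4) = 2 from rfl]
  ring

/-- The concyclicity matrix of four complex points. -/
private noncomputable def M4 (z : Fin 4 → ℂ) : Matrix (Fin 4) (Fin 4) ℝ :=
  Matrix.of (fun i => ![Complex.normSq (z i), (z i).re, (z i).im, 1])

private theorem keydet (z : Fin 4 → ℂ) :
    (M4 z).det
    = (((z 3 - z 0) * (z 1 - z 2)) * (starRingEnd ℂ) ((z 3 - z 2) * (z 1 - z 0))).im := by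
  rw [det_fin_four']
  simp [M4, Complex.normSq_apply, Complex.mul_im, Complex.mul_re,
    Complex.sub_re, Complex.sub_im, Complex.conj_re, Complex.conj_im]
  ring

private theorem dotN (z : ℂ) (v : Fin 3 → ℝ) (t : ℝ) :
    Nvec z ⬝ᵥ v = t ↔
      (-(v 2) - t) * Complex.normSq z + (-2 * v 0) * z.re + (2 * v 1) * z.im + (v 2 - t) = 0 := by
  have hpos : (0:ℝ) < 1 + Complex.normSq z := by
    have := Complex.normSq_nonneg z; linarith
  have hsq : ‖z‖ ^ 2 = Complex.normSq z := Complex.sq_norm z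
  have hne : (1 + Complex.normSq z) ≠ 0 := ne_of_gt hpos
  rw [dotProduct, Fin.sum_univ_three]
  simp only [Nvec, hsq, Matrix.cons_val_zero, Matrix.cons_val_one, Matrix.head_cons,
    Matrix.cons_val_two, Matrix.tail_cons]
  rw [div_mul_eq_mul_div, div_mul_eq_mul_div, div_mul_eq_mul_div, ← add_div,
    ← add_div, div_eq_iff hne]
  constructor <;> intro h <;> nlinarith [h]

private theorem im_div_zero_iff (p q : ℂ) (hq : q ≠ 0) :
    (p / q).im = 0 ↔ (p * (starRingEnd ℂ) q).im = 0 := by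
  have hnsq : Complex.normSq q ≠ 0 := (Complex.normSq_pos.2 hq).ne'
  have h : (p / q).im = (p * (starRingEnd ℂ) q).im / Complex.normSq q := by
    rw [Complex.div_im, Complex.mul_im, Complex.normSq_apply, Complex.conj_re, Complex.conj_im]
    field_simp
    ring
  rw [h, div_eq_zero_iff]
  simp [hnsq]

/-- A closed configuration is a degenerate (zero-volume) tetrahedron iff its cross-ratio is
real. -/
theorem degenerate_iff_crossRatio_real
    (z : Fin 4 → ℂ) (hz : ∀ i k, i ≠ k → z i ≠ z k)
    (j : Fin 4 → ℝ) (hj : ∀ i, 0 < j i)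
    (hclo : ∑ i, j i • Nvec (z i) = 0) :
    det3 (Nvec (z 0)) (Nvec (z 1)) (Nvec (z 2)) = 0 ↔
      (((z 3 - z 0) * (z 1 - z 2)) / ((z 3 - z 2) * (z 1 - z 0))).im = 0 := by
  set M : Matrix (Fin 3) (Fin 3) ℝ := Matrix.of ![Nvec (z 0), Nvec (z 1), Nvec (z 2)] with hM
  have hdet3 : det3 (Nvec (z 0)) (Nvec (z 1)) (Nvec (z 2)) = M.det := by
    rw [det3, Matrix.det_transpose]
  have hden : (z 3 - z 2) * (z 1 - z 0) ≠ 0 := by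
    apply mul_ne_zero
    · exact sub_ne_zero.2 (hz 3 2 (by decide))
    · exact sub_ne_zero.2 (hz 1 0 (by decide))
  rw [hdet3, im_div_zero_iff _ _ hden, ← keydet z, ← Matrix.exists_mulVec_eq_zero_iff,
    ← Matrix.exists_mulVec_eq_zero_iff]
  -- sum of weighted dot products vanishes
  have hsum : ∀ v : Fin 3 → ℝ, ∑ i, j i * (Nvec (z i) ⬝ᵥ v) = 0 := by
    intro v
    have h0 := congrArg (fun f : Fin 3 → ℝ => f ⬝ᵥ v) hclo
    simp only [dotProduct, Finset.sum_apply, Pi.smul_apply, smul_eq_mul, Pi.zero_apply,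
      zero_mul, Finset.sum_const_zero, Finset.sum_mul] at h0
    rw [Finset.sum_comm] at h0
    simpa [dotProduct, Finset.mul_sum, mul_assoc] using h0
  constructor
  · rintro ⟨v, hv, hMv⟩
    -- each of N0 N1 N2 is orthogonal to v; extend to N3 via closure
    have h0 : Nvec (z 0) ⬝ᵥ v = 0 := by
      simpa [M, Matrix.mulVec, dotProduct] using congrFun hMv 0
    have h1 : Nvec (z 1) ⬝ᵥ v = 0 := by
      simpa [M, Matrix.mulVec, dotProduct] using congrFun hMv 1
    have h2 : Nvec (z 2) ⬝ᵥ v = 0 := by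
      simpa [M, Matrix.mulVec, dotProduct] using congrFun hMv 2
    have h3 : Nvec (z 3) ⬝ᵥ v = 0 := by
      have hs := hsum v
      rw [Fin.sum_univ_four, h0, h1, h2] at hs
      simp only [mul_zero, zero_add] at hs
      exact (mul_eq_zero.1 hs).resolve_left (ne_of_gt (hj 3))
    have hall : ∀ i : Fin 4, Nvec (z i) ⬝ᵥ v = 0 := by
      intro i; fin_cases i <;> assumption
    refine ⟨![-(v 2), -2 * v 0, 2 * v 1, v 2], ?_, ?_⟩
    · intro hkk
      apply hv
      have e0 := congrFun hkk 0
      have e1 := congrFun hkk 1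
      have e2 := congrFun hkk 2
      simp at e0 e1 e2
      funext i; fin_cases i
      · show v 0 = 0; linarith
      · show v 1 = 0; linarith
      · show v 2 = 0; linarith
    · funext i
      have hi := (dotN (z i) v 0).1 (hall i)
      simp only [M4, Matrix.mulVec, dotProduct, Fin.sum_univ_four, Matrix.of_apply,
        Matrix.cons_val_zero, Matrix.cons_val_one, Matrix.head_cons, Matrix.cons_val_two,
        Matrix.tail_cons, Matrix.cons_val_three, Pi.zero_apply]
      linarith [hi]
  · rintro ⟨k, hk, hMk⟩
    -- circle equation for all four points
    have hcirc : ∀ i : Fin 4,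
        k 0 * Complex.normSq (z i) + k 1 * (z i).re + k 2 * (z i).im + k 3 = 0 := by
      intro i
      have h := congrFun hMk i
      simp [M4, Matrix.mulVec, dotProduct, Fin.sum_univ_four] at h
      linarith [h]
    set v : Fin 3 → ℝ := ![-(k 1) / 2, k 2 / 2, (k 3 - k 0) / 2] with hvdef
    set t : ℝ := -(k 0 + k 3) / 2 with htdef
    have hdots : ∀ i : Fin 4, Nvec (z i) ⬝ᵥ v = t := by
      intro i
      rw [dotN]
      have hci := hcirc i
      simp only [hvdef, htdef, Matrix.cons_val_zero, Matrix.cons_val_one, Matrix.head_cons,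
        Matrix.cons_val_two, Matrix.tail_cons]
      linarith [hci]
    -- closure forces t = 0
    have ht : t = 0 := by
      have hs := hsum v
      rw [Fin.sum_univ_four] at hs
      simp only [hdots] at hs
      have hjs : 0 < j 0 + j 1 + j 2 + j 3 := by
        have := hj 0; have := hj 1; have := hj 2; have := hj 3; linarith
      have h' : (j 0 + j 1 + j 2 + j 3) * t = 0 := by linarith
      exact (mul_eq_zero.1 h').resolve_left (ne_of_gt hjs)
    rw [htdef] at ht
    refine ⟨v, ?_, ?_⟩
    · intro hv0
      apply hk
      have e0 := congrFun hv0 0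
      have e1 := congrFun hv0 1
      have e2 := congrFun hv0 2
      simp [hvdef] at e0 e1 e2
      funext i; fin_cases i
      · show k 0 = 0; linarith
      · show k 1 = 0; linarith
      · show k 2 = 0; linarith
      · show k 3 = 0; linarith
    · funext i
      have hi : ∀ m : Fin 4, Nvec (z m) ⬝ᵥ v = 0 := by
        intro m
        rw [hdots m, htdef]
        exact ht
      fin_cases i
      · simpa [M, Matrix.mulVec, dotProduct] using hi 0
      · simpa [M, Matrix.mulVec, dotProduct] using hi 1
      · simpa [M, Matrix.mulVec, dotProduct] using hi 2
end

section
/- Let N₁, N₂, N₃, N₄ ∈ ℝ³ be unit vectors and j₁,…,j₄ > 0 real numbers. Let G be the 3×3 matrix G = Σᵢ jᵢ (I₃ − Nᵢ Nᵢᵀ). Then det(G) = (j₁+j₂+j₃+j₄) · Σ_{1≤i<k≤4} jᵢ jₖ ‖Nᵢ × Nₖ‖² − Σ_{1≤i<k<m≤4} jᵢ jₖ jₘ (det(Nᵢ, Nₖ, Nₘ))². -/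
open Matrix

/-- The orbit metric `G = Σᵢ jᵢ (I₃ − Nᵢ Nᵢᵀ)`. -/
noncomputable def Gmat (j : Fin 4 → ℝ) (N : Fin 4 → Fin 3 → ℝ) : Matrix (Fin 3) (Fin 3) ℝ :=
  Matrix.of fun a b => ∑ i, j i * ((if a = b then (1 : ℝ) else 0) - N i a * N i b)

set_option maxRecDepth 40000
set_option maxHeartbeats 2000000

/-- The determinant of the orbit metric `G`:
`det G = (Σᵢ jᵢ) Σ_{i<k} jᵢ jₖ ‖Nᵢ × Nₖ‖² − Σ_{i<k<m} jᵢ jₖ jₘ det(Nᵢ,Nₖ,Nₘ)²`. -/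
theorem det_orbit_metric
    (N : Fin 4 → Fin 3 → ℝ) (hN : ∀ i, ∑ x, N i x ^ 2 = 1)
    (j : Fin 4 → ℝ) (hj : ∀ i, 0 < j i) :
    (Gmat j N).det =
      (∑ i, j i) *
        (∑ i, ∑ k, if i < k then j i * j k * (∑ x, ((N i) ⨯₃ (N k)) x ^ 2) else 0)
      - ∑ i, ∑ k, ∑ m, if i < k ∧ k < m then
          j i * j k * j m * det3 (N i) (N k) (N m) ^ 2 else 0 := by
  have h0 := hN 0; have h1 := hN 1; have h2 := hN 2; have h3 := hN 3
  simp only [Fin.sum_univ_three] at h0 h1 h2 h3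
  simp only [Fin.sum_univ_four, Fin.isValue]
  simp only [show ((0:Fin 4)<0)=(False) by decide, show ((0:Fin 4)<1)=(True) by decide, show ((0:Fin 4)<2)=(True) by decide, show ((0:Fin 4)<3)=(True) by decide, show ((1:Fin 4)<0)=(False) by decide, show ((1:Fin 4)<1)=(False) by decide, show ((1:Fin 4)<2)=(True) by decide, show ((1:Fin 4)<3)=(True) by decide, show ((2:Fin 4)<0)=(False) by decide, show ((2:Fin 4)<1)=(False) by decide, show ((2:Fin 4)<2)=(False) by decide, show ((2:Fin 4)<3)=(True) by decide, show ((3:Fin 4)<0)=(False) by decide, show ((3:Fin 4)<1)=(False) by decide, show ((3:Fin 4)<2)=(False) by decide, show ((3:Fin 4)<3)=(False) by decide,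
    true_and, false_and, and_true, and_false, if_true, if_false, add_zero, zero_add]
  simp only [Gmat, det3, Matrix.det_fin_three, cross_apply, Fin.sum_univ_four,
    Fin.sum_univ_three, Matrix.of_apply, Matrix.transpose_apply, Matrix.cons_val',
    Matrix.cons_val_zero, Matrix.cons_val_one, Matrix.head_cons, Matrix.cons_val_two,
    Matrix.tail_cons, Matrix.head_fin_const, Matrix.empty_val', Matrix.cons_val_fin_one]
  simp only [show ((0:Fin 3)=(1:Fin 3))=(False) by decide, show ((0:Fin 3)=(2:Fin 3))=(False) by decide, show ((1:Fin 3)=(0:Fin 3))=(False) by decide, show ((1:Fin 3)=(2:Fin 3))=(False) by decide, show ((2:Fin 3)=(0:Fin 3))=(False) by decide, show ((2:Fin 3)=(1:Fin 3))=(False) by decide, if_true, if_false]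
  linear_combination (-(j 0 + j 1 + j 2 + j 3)^2 * j 0) * h0 +
    (-(j 0 + j 1 + j 2 + j 3)^2 * j 1) * h1 +
    (-(j 0 + j 1 + j 2 + j 3)^2 * j 2) * h2 +
    (-(j 0 + j 1 + j 2 + j 3)^2 * j 3) * h3
end

section
/- Let d₁, d₂, d₃ be nonnegative integers and set n₁ = d₂+d₃, n₂ = d₁+d₃, n₃ = d₁+d₂. Let P ∈ ℂ[z₁,z₂,z₃] be a polynomial such that: (i) the degree of P in zᵢ is at most nᵢ for each i; (ii) P(z₁+a, z₂+a, z₃+a) = P(z₁,z₂,z₃) for all a, z₁, z₂, z₃ ∈ ℂ; (iii) P(λz₁, λz₂, λz₃) = λ^{d₁+d₂+d₃} P(z₁,z₂,z₃) for all λ, zᵢ ∈ ℂ; (iv) z₁^{n₁} z₂^{n₂} z₃^{n₃} · P(−1/z₁, −1/z₂, −1/z₃) = P(z₁,z₂,z₃) for all nonzero z₁, z₂, z₃ ∈ ℂ. Then there exists c ∈ ℂ such that P(z₁,z₂,z₃) = c·(z₁−z₂)^{d₃}(z₂−z₃)^{d₁}(z₃−z₁)^{d₂}. (The space of 3-valent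 SL(2,ℂ)-invariant holomorphic sections is one-dimensional.) -/
open Polynomial

private lemma eval_aeval3 (P : MvPolynomial (Fin 3) ℂ) (v : Fin 3 → Polynomial ℂ) (t : ℂ) :
    (MvPolynomial.aeval v P).eval t = MvPolynomial.eval (fun i => (v i).eval t) P := by
  induction P using MvPolynomial.induction_on with
  | C a => simp
  | add p q hp hq => simp [hp, hq]
  | mul_X p i hp => simp [hp]

private lemma eval_aeval3' (P : MvPolynomial (Fin 3) ℂ) (a b c : Polynomial ℂ) (t : ℂ) :
    (MvPolynomial.aeval ![a, b, c] P).eval t =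
      MvPolynomial.eval ![a.eval t, b.eval t, c.eval t] P := by
  rw [eval_aeval3]
  have h : (fun i => Polynomial.eval t (![a, b, c] i)) = ![a.eval t, b.eval t, c.eval t] := by
    funext i; fin_cases i <;> simp
  rw [h]

private lemma nonzero_infinite : ({t : ℂ | t ≠ 0}).Infinite := by
  have h := Set.Finite.infinite_compl (Set.finite_singleton (0 : ℂ))
  rwa [Set.compl_singleton_eq] at h

private lemma aux_p_structure (d₁ d₂ d₃ : ℕ) (P : MvPolynomial (Fin 3) ℂ)
    (hdeg0 : MvPolynomial.degreeOf 0 P ≤ d₂ + d₃)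
    (hdeg1 : MvPolynomial.degreeOf 1 P ≤ d₁ + d₃)
    (hdeg2 : MvPolynomial.degreeOf 2 P ≤ d₁ + d₂)
    (htrans : ∀ a z₁ z₂ z₃ : ℂ,
      MvPolynomial.eval ![z₁ + a, z₂ + a, z₃ + a] P = MvPolynomial.eval ![z₁, z₂, z₃] P)
    (hscale : ∀ lam z₁ z₂ z₃ : ℂ,
      MvPolynomial.eval ![lam * z₁, lam * z₂, lam * z₃] P =
        lam ^ (d₁ + d₂ + d₃) * MvPolynomial.eval ![z₁, z₂, z₃] P)
    (natDegree_aeval3_le : ∀ (i : Fin 3) (v : Fin 3 → Polynomial ℂ),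
      (∀ j, (v j).natDegree ≤ if j = i then 1 else 0) →
      (MvPolynomial.aeval v P).natDegree ≤ MvPolynomial.degreeOf i P) :
    ∃ c : ℂ, (MvPolynomial.aeval ![X, 1, 0] P : Polynomial ℂ) =
      C c * (X ^ d₂ * (X - 1) ^ d₃) := by
  set p : Polynomial ℂ := MvPolynomial.aeval ![X, 1, 0] P with hp_def
  set q : Polynomial ℂ := MvPolynomial.aeval ![1, X, 0] P with hq_def
  set r : Polynomial ℂ := MvPolynomial.aeval ![1, 0, X] P with hr_def
  have hpdeg : p.natDegree ≤ d₂ + d₃ := by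
    refine le_trans (natDegree_aeval3_le 0 _ ?_) hdeg0
    intro j; fin_cases j <;> simp
  have hqdeg : q.natDegree ≤ d₁ + d₃ := by
    refine le_trans (natDegree_aeval3_le 1 _ ?_) hdeg1
    intro j; fin_cases j <;> simp
  have hrdeg : r.natDegree ≤ d₁ + d₂ := by
    refine le_trans (natDegree_aeval3_le 2 _ ?_) hdeg2
    intro j; fin_cases j <;> simp
  have hpe : ∀ t : ℂ, p.eval t = MvPolynomial.eval ![t, 1, 0] P := by
    intro t; rw [hp_def, eval_aeval3']; simp
  have hqe : ∀ t : ℂ, q.eval t = MvPolynomial.eval ![1, t, 0] P := by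
    intro t; rw [hq_def, eval_aeval3']; simp
  have hre : ∀ t : ℂ, r.eval t = MvPolynomial.eval ![1, 0, t] P := by
    intro t; rw [hr_def, eval_aeval3']; simp
  -- Claim A : X^d₂ ∣ p
  set s : Polynomial ℂ :=
    ∑ j ∈ Finset.range (d₁ + d₃ + 1), C (q.coeff j) * X ^ (d₁ + d₃ - j) with hs_def
  have hA : p = X ^ d₂ * s := by
    apply Polynomial.eq_of_infinite_eval_eq
    apply Set.Infinite.mono _ nonzero_infinite
    intro t ht
    simp only [Set.mem_setOf_eq] at ht ⊢
    have h1 : MvPolynomial.eval ![t, 1, 0] P =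
        t ^ (d₁ + d₂ + d₃) * MvPolynomial.eval ![1, t⁻¹, 0] P := by
      have h2 := hscale t 1 t⁻¹ 0
      rw [mul_one, mul_inv_cancel₀ ht, mul_zero] at h2
      exact h2
    rw [hpe, h1, ← hqe, Polynomial.eval_eq_sum_range' (Nat.lt_succ_of_le hqdeg) t⁻¹,
      Polynomial.eval_mul, Polynomial.eval_pow, Polynomial.eval_X, hs_def,
      Polynomial.eval_finset_sum, Finset.mul_sum, Finset.mul_sum]
    apply Finset.sum_congr rfl
    intro j hj
    have hj' : j ≤ d₁ + d₃ := Nat.lt_succ_iff.mp (Finset.mem_range.mp hj)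
    simp only [Polynomial.eval_mul, Polynomial.eval_pow, Polynomial.eval_X, Polynomial.eval_C]
    have hpow : t ^ (d₁ + d₂ + d₃) = t ^ d₂ * t ^ (d₁ + d₃ - j) * t ^ j := by
      rw [← pow_add, ← pow_add]; congr 1; omega
    rw [hpow, inv_pow]
    field_simp
  -- Claim B : (X-1)^d₃ ∣ p
  set s' : Polynomial ℂ :=
    ∑ j ∈ Finset.range (d₁ + d₂ + 1), C (r.coeff j * (-1) ^ j) * X ^ (d₁ + d₂ - j) with hs'_def
  have hB : p.comp (X + 1) = X ^ d₃ * s' := by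
    apply Polynomial.eq_of_infinite_eval_eq
    apply Set.Infinite.mono _ nonzero_infinite
    intro u hu
    simp only [Set.mem_setOf_eq] at hu ⊢
    have h1 : MvPolynomial.eval ![u + 1, 1, 0] P = MvPolynomial.eval ![u, 0, -1] P := by
      have h2 := htrans 1 u 0 (-1)
      rw [zero_add, neg_add_cancel] at h2
      exact h2
    have h3 : MvPolynomial.eval ![u, 0, -1] P =
        u ^ (d₁ + d₂ + d₃) * MvPolynomial.eval ![1, 0, -u⁻¹] P := by
      have h4 := hscale u 1 0 (-u⁻¹)
      rw [mul_one, mul_zero, mul_neg, mul_inv_cancel₀ hu] at h4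
      exact h4
    rw [Polynomial.eval_comp, Polynomial.eval_add, Polynomial.eval_X, Polynomial.eval_one,
      hpe, h1, h3, ← hre, Polynomial.eval_eq_sum_range' (Nat.lt_succ_of_le hrdeg) (-u⁻¹),
      Polynomial.eval_mul, Polynomial.eval_pow, Polynomial.eval_X, hs'_def,
      Polynomial.eval_finset_sum, Finset.mul_sum, Finset.mul_sum]
    apply Finset.sum_congr rfl
    intro j hj
    have hj' : j ≤ d₁ + d₂ := Nat.lt_succ_iff.mp (Finset.mem_range.mp hj)
    simp only [Polynomial.eval_mul, Polynomial.eval_pow, Polynomial.eval_X, Polynomial.eval_C]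
    have hpow : u ^ (d₁ + d₂ + d₃) = u ^ d₃ * u ^ (d₁ + d₂ - j) * u ^ j := by
      rw [← pow_add, ← pow_add]; congr 1; omega
    rw [hpow, neg_pow, inv_pow]
    field_simp
  have hBdvd : (X - 1 : Polynomial ℂ) ^ d₃ ∣ p := by
    have hcomp : p = (p.comp (X + 1)).comp (X - 1) := by
      rw [Polynomial.comp_assoc]
      simp [Polynomial.add_comp, sub_add_cancel]
    rw [hB, Polynomial.mul_comp, Polynomial.pow_comp, Polynomial.X_comp] at hcomp
    exact ⟨s'.comp (X - 1), hcomp⟩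
  have hcop : IsCoprime ((X : Polynomial ℂ) ^ d₂) ((X - 1 : Polynomial ℂ) ^ d₃) :=
    IsCoprime.pow (⟨1, -1, by ring⟩ : IsCoprime (X : Polynomial ℂ) (X - 1))
  obtain ⟨w, hw⟩ := hcop.mul_dvd ⟨s, hA⟩ hBdvd
  by_cases hw0 : w = 0
  · exact ⟨0, by rw [hw, hw0, mul_zero, map_zero, zero_mul]⟩
  · have hne : (X ^ d₂ * (X - 1) ^ d₃ : Polynomial ℂ) ≠ 0 := by
      apply mul_ne_zero (pow_ne_zero _ Polynomial.X_ne_zero)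
      apply pow_ne_zero
      rw [← Polynomial.C_1]
      exact Polynomial.X_sub_C_ne_zero 1
    have hdeg : (X ^ d₂ * (X - 1) ^ d₃ : Polynomial ℂ).natDegree = d₂ + d₃ := by
      rw [Polynomial.natDegree_mul (pow_ne_zero _ Polynomial.X_ne_zero)
        (pow_ne_zero _ (by rw [← Polynomial.C_1]; exact Polynomial.X_sub_C_ne_zero 1))]
      rw [Polynomial.natDegree_pow, Polynomial.natDegree_pow, Polynomial.natDegree_X]
      rw [show (X - 1 : Polynomial ℂ) = X - C 1 by rw [Polynomial.C_1],
        Polynomial.natDegree_X_sub_C]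
      ring
    have h5 : p.natDegree = d₂ + d₃ + w.natDegree := by
      rw [hw, Polynomial.natDegree_mul hne hw0, hdeg]
    have h6 : w.natDegree = 0 := by omega
    obtain ⟨c, hc⟩ := Polynomial.natDegree_eq_zero.mp h6
    exact ⟨c, by rw [hw, ← hc]; ring⟩
private lemma natDegree_aeval3_le (P : MvPolynomial (Fin 3) ℂ) (i : Fin 3)
    (v : Fin 3 → Polynomial ℂ) (hv : ∀ j, (v j).natDegree ≤ if j = i then 1 else 0) :
    (MvPolynomial.aeval v P).natDegree ≤ MvPolynomial.degreeOf i P := by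
  conv_lhs => rw [P.as_sum, map_sum]
  apply Polynomial.natDegree_sum_le_of_forall_le
  intro m hm
  rw [MvPolynomial.aeval_monomial]
  calc (algebraMap ℂ (Polynomial ℂ) (MvPolynomial.coeff m P) *
          m.prod fun j e => v j ^ e).natDegree
      ≤ (m.prod fun j e => v j ^ e).natDegree := by
        simpa using Polynomial.natDegree_C_mul_le (MvPolynomial.coeff m P) _
    _ ≤ ∑ j ∈ m.support, ((v j) ^ (m j)).natDegree := by
        rw [Finsupp.prod]; exact Polynomial.natDegree_prod_le _ _
    _ ≤ ∑ j ∈ m.support, ite (j = i) (m i) 0 := by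
        apply Finset.sum_le_sum
        intro j _
        by_cases h : j = i
        · subst h
          have h1 := hv j
          simp only [if_pos rfl] at h1 ⊢
          calc ((v j) ^ (m j)).natDegree ≤ m j * (v j).natDegree :=
                Polynomial.natDegree_pow_le
            _ ≤ m j * 1 := Nat.mul_le_mul_left _ h1
            _ = m j := Nat.mul_one _
        · have h1 := hv j
          simp only [if_neg h] at h1 ⊢
          have h2 : (v j).natDegree = 0 := Nat.le_zero.mp h1
          calc ((v j) ^ (m j)).natDegree ≤ m j * (v j).natDegree :=
                Polynomial.natDegree_pow_le
            _ = 0 := by rw [h2, Nat.mul_zero]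
    _ ≤ m i := by
        rw [Finset.sum_ite_eq' m.support i (fun _ => m i)]
        split <;> omega
    _ ≤ MvPolynomial.degreeOf i P := MvPolynomial.monomial_le_degreeOf i hm

/-- The space of 3-valent SL(2,ℂ)-invariant holomorphic sections is one-dimensional: a
polynomial in three variables of degree `≤ nᵢ = Σd − dᵢ` in `zᵢ`, invariant under translations,
homogeneous of degree `d₁+d₂+d₃` under dilations and invariant under inversion, is a multiple
of `(z₁−z₂)^{d₃}(z₂−z₃)^{d₁}(z₃−z₁)^{d₂}`. -/
theorem trivalent_invariant_section_unique
    (d₁ d₂ d₃ : ℕ) (P : MvPolynomial (Fin 3) ℂ)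
    (hdeg0 : MvPolynomial.degreeOf 0 P ≤ d₂ + d₃)
    (hdeg1 : MvPolynomial.degreeOf 1 P ≤ d₁ + d₃)
    (hdeg2 : MvPolynomial.degreeOf 2 P ≤ d₁ + d₂)
    (htrans : ∀ a z₁ z₂ z₃ : ℂ,
      MvPolynomial.eval ![z₁ + a, z₂ + a, z₃ + a] P = MvPolynomial.eval ![z₁, z₂, z₃] P)
    (hscale : ∀ lam z₁ z₂ z₃ : ℂ,
      MvPolynomial.eval ![lam * z₁, lam * z₂, lam * z₃] P =
        lam ^ (d₁ + d₂ + d₃) * MvPolynomial.eval ![z₁, z₂, z₃] P)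
    (hinv : ∀ z₁ z₂ z₃ : ℂ, z₁ ≠ 0 → z₂ ≠ 0 → z₃ ≠ 0 →
      z₁ ^ (d₂ + d₃) * z₂ ^ (d₁ + d₃) * z₃ ^ (d₁ + d₂) *
          MvPolynomial.eval ![-1 / z₁, -1 / z₂, -1 / z₃] P =
        MvPolynomial.eval ![z₁, z₂, z₃] P) :
    ∃ c : ℂ, ∀ z₁ z₂ z₃ : ℂ,
      MvPolynomial.eval ![z₁, z₂, z₃] P =
        c * (z₁ - z₂) ^ d₃ * (z₂ - z₃) ^ d₁ * (z₃ - z₁) ^ d₂ := by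
  obtain ⟨c, hpc⟩ := aux_p_structure d₁ d₂ d₃ P hdeg0 hdeg1 hdeg2 htrans hscale
    (fun i v hv => natDegree_aeval3_le P i v hv)
  have hpe : ∀ t : ℂ, Polynomial.eval t (MvPolynomial.aeval ![X, 1, 0] P : Polynomial ℂ) =
      MvPolynomial.eval ![t, 1, 0] P := by
    intro t; rw [eval_aeval3']; simp
  -- key : values on the plane z₃ = 0
  have key : ∀ x y : ℂ, MvPolynomial.eval ![x, y, 0] P =
      c * x ^ d₂ * (x - y) ^ d₃ * y ^ d₁ := by
    have hfun : ∀ x : ℂ, (MvPolynomial.aeval ![Polynomial.C x, X, Polynomial.C 0] P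
        : Polynomial ℂ) = C (c * x ^ d₂) * (C x - X) ^ d₃ * X ^ d₁ := by
      intro x
      apply Polynomial.eq_of_infinite_eval_eq
      apply Set.Infinite.mono _ nonzero_infinite
      intro y hy
      simp only [Set.mem_setOf_eq] at hy ⊢
      rw [eval_aeval3']
      simp only [Polynomial.eval_C, Polynomial.eval_X]
      have h1 : MvPolynomial.eval ![x, y, 0] P =
          y ^ (d₁ + d₂ + d₃) * MvPolynomial.eval ![x * y⁻¹, 1, 0] P := by
        have h2 := hscale y (x * y⁻¹) 1 0
        rw [mul_one, mul_zero] at h2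
        rw [show y * (x * y⁻¹) = x by field_simp] at h2
        exact h2
      rw [h1, ← hpe, hpc]
      simp only [Polynomial.eval_mul, Polynomial.eval_pow, Polynomial.eval_C,
        Polynomial.eval_X, Polynomial.eval_sub, Polynomial.eval_one]
      have h2 : y ^ d₂ * (x * y⁻¹) ^ d₂ = x ^ d₂ := by
        rw [← mul_pow]; congr 1; field_simp
      have h3 : y ^ d₃ * (x * y⁻¹ - 1) ^ d₃ = (x - y) ^ d₃ := by
        rw [← mul_pow]; congr 1; field_simp
      calc y ^ (d₁ + d₂ + d₃) * (c * ((x * y⁻¹) ^ d₂ * (x * y⁻¹ - 1) ^ d₃)) =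
          c * (y ^ d₂ * (x * y⁻¹) ^ d₂) * (y ^ d₃ * (x * y⁻¹ - 1) ^ d₃) * y ^ d₁ := by
            rw [show d₁ + d₂ + d₃ = d₂ + d₃ + d₁ by ring, pow_add, pow_add]; ring
        _ = c * x ^ d₂ * (x - y) ^ d₃ * y ^ d₁ := by rw [h2, h3]
    intro x y
    have h4 := congrArg (Polynomial.eval y) (hfun x)
    rw [eval_aeval3'] at h4
    simp only [Polynomial.eval_C, Polynomial.eval_X, Polynomial.eval_mul,
      Polynomial.eval_pow, Polynomial.eval_sub] at h4
    exact h4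
  refine ⟨c * (-1) ^ d₂, fun z₁ z₂ z₃ => ?_⟩
  have hv : (![z₁, z₂, z₃] : Fin 3 → ℂ) = ![(z₁ - z₃) + z₃, (z₂ - z₃) + z₃, 0 + z₃] := by
    funext i; fin_cases i <;> simp
  rw [hv, htrans z₃ (z₁ - z₃) (z₂ - z₃) 0, key (z₁ - z₃) (z₂ - z₃)]
  have h1 : ((-1 : ℂ)) ^ d₂ * ((-1 : ℂ)) ^ d₂ = 1 := by
    rw [← pow_add, ← two_mul, pow_mul]; norm_num
  rw [show (z₃ - z₁) ^ d₂ = (-1 : ℂ) ^ d₂ * (z₁ - z₃) ^ d₂ by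
    rw [show z₃ - z₁ = -(z₁ - z₃) by ring, neg_pow]]
  have h2 : z₁ - z₃ - (z₂ - z₃) = z₁ - z₂ := by ring
  rw [h2]
  linear_combination (-(c * (z₁ - z₂) ^ d₃ * (z₂ - z₃) ^ d₁ * (z₁ - z₃) ^ d₂)) * h1
end
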